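/- arXiv:2310.15531 — 3 statements merged into one kernel-verified Lean document; each statement's English description precedes it below -/
import Mathlib

section
/- Let (W,S) be a Coxeter system and w a word over S with l(w) < γ(W)/2, where γ(W) = 2·min_{s≠t} m_{s,t}. If w is not reduced, then w contains a substring of the form ss for some s ∈ S. -/
namespace CoxShortProof
open CoxeterSystem List Complex

noncomputable section Geo

variable {B : Type*} (M : CoxeterMatrix B)

/-- `exp (π I / m)` where `m = M x y`. -/
def zeta (x y : B) : ℂ := Complex.exp (Real.pi * Complex.I / (M x y : ℂ))

/-- half-trace `cos (π / m)`. -/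
def cc (x y : B) : ℂ := (zeta M x y + (zeta M x y)⁻¹) / 2

/-- the bilinear-form coefficient. -/
def kappa (x y : B) : ℂ := -(cc M x y)

theorem zeta_ne_zero (x y : B) : zeta M x y ≠ 0 := Complex.exp_ne_zero _

theorem kappa_symm (x y : B) : kappa M x y = kappa M y x := by
  unfold kappa cc zeta; rw [M.symmetric]

theorem zeta_self (x : B) : zeta M x x = -1 := by
  unfold zeta
  rw [M.diagonal]
  push_cast
  rw [div_one]
  exact Complex.exp_pi_mul_I

theorem kappa_self (x : B) : kappa M x x = 1 := by
  unfold kappa cc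
  rw [zeta_self]
  norm_num

theorem zeta_zero {x y : B} (h : M x y = 0) : zeta M x y = 1 := by
  unfold zeta
  rw [h]
  push_cast
  rw [div_zero]
  exact Complex.exp_zero

theorem kappa_zero {x y : B} (h : M x y = 0) : kappa M x y = -1 := by
  unfold kappa cc
  rw [zeta_zero M h]
  norm_num

theorem zeta_pow {x y : B} (h : M x y ≠ 0) : (zeta M x y) ^ (M x y) = -1 := by
  unfold zeta
  rw [← Complex.exp_nat_mul, mul_div_cancel₀ _ (by exact_mod_cast h : ((M x y : ℕ) : ℂ) ≠ 0)]
  exact Complex.exp_pi_mul_I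

theorem zeta_sq_ne_one {x y : B} (h2 : 2 ≤ M x y) : (zeta M x y) ^ 2 ≠ 1 := by
  set m := M x y with hm'
  intro h
  unfold zeta at h
  rw [← Complex.exp_nat_mul] at h
  obtain ⟨n, hn⟩ := Complex.exp_eq_one_iff.mp h
  have hm : ((m : ℂ)) ≠ 0 := by exact_mod_cast (by omega : m ≠ 0)
  have hpi : (Real.pi : ℂ) ≠ 0 := by exact_mod_cast Real.pi_ne_zero
  have hI := Complex.I_ne_zero
  have key : (n:ℂ) * m = 1 := by
    field_simp at hn
    have h0 : ((n:ℂ) * m - 1) * (2 * Real.pi * Complex.I) = 0 := by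
      rw [← hm'] at hn; push_cast at hn; field_simp at hn
      linear_combination (-(2 * Real.pi * Complex.I)) * hn
    rcases mul_eq_zero.mp h0 with h | h
    · exact sub_eq_zero.mp h
    · exact absurd h (mul_ne_zero (mul_ne_zero two_ne_zero hpi) hI)
  have key2 : n * (m:ℤ) = 1 := by exact_mod_cast key
  have hdvd : (m:ℤ) ∣ 1 := ⟨n, by linarith⟩
  have := Int.le_of_dvd one_pos hdvd
  omega

/-- if `ζ^(4d) = 1` with `0 < d < m` then `2d = m`. -/
theorem zeta_pow_four_d {x y : B} (h2 : 2 ≤ M x y) {d : ℕ} (hd : 0 < d) (hdm : d < M x y)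
    (h : (zeta M x y) ^ (4 * d) = 1) : 2 * d = M x y := by
  set m := M x y with hm'
  unfold zeta at h
  rw [← Complex.exp_nat_mul] at h
  obtain ⟨n, hn⟩ := Complex.exp_eq_one_iff.mp h
  have hm : ((m : ℂ)) ≠ 0 := by exact_mod_cast (by omega : m ≠ 0)
  have hpi : (Real.pi : ℂ) ≠ 0 := by exact_mod_cast Real.pi_ne_zero
  have hI := Complex.I_ne_zero
  have key : (2 * (d:ℂ)) = n * m := by
    field_simp at hn
    have h0 : ((2:ℂ) * d - n * m) * (2 * Real.pi * Complex.I) = 0 := by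
      push_cast at hn ⊢
      rw [← hm'] at hn; field_simp at hn
      linear_combination (Real.pi * Complex.I) * hn
    rcases mul_eq_zero.mp h0 with h | h
    · linear_combination h
    · exact absurd h (mul_ne_zero (mul_ne_zero two_ne_zero hpi) hI)
  have key2 : 2 * (d:ℤ) = n * (m:ℤ) := by exact_mod_cast key
  -- 0 < 2d < 2m, so n = 1
  have h1 : 0 < n * (m:ℤ) := by omega
  have h2' : n * (m:ℤ) < 2 * m := by omega
  have hn1 : n = 1 := by nlinarith
  rw [hn1, one_mul] at key2
  omega

end Geo
end CoxShortProof

namespace CoxShortProof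
open CoxeterSystem List Complex

noncomputable section Geo2

variable {B : Type*} (M : CoxeterMatrix B)

/-- the linear functional `v ↦ 2 B(e_t, v)`. -/
def phiF (t : B) : (B →₀ ℂ) →ₗ[ℂ] ℂ :=
  Finsupp.linearCombination ℂ (fun u => 2 * kappa M t u)

/-- the reflection attached to `t`. -/
def sig (t : B) : Module.End ℂ (B →₀ ℂ) :=
  LinearMap.id - LinearMap.smulRight (phiF M t) (Finsupp.single t 1)

theorem sig_apply (t : B) (v : B →₀ ℂ) :
    sig M t v = v - phiF M t v • Finsupp.single t 1 := rfl

theorem phiF_single (t u : B) (c : ℂ) :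
    phiF M t (Finsupp.single u c) = c * (2 * kappa M t u) := by
  simp [phiF, Finsupp.linearCombination_single, smul_eq_mul]

theorem sig_sig (t : B) (v : B →₀ ℂ) : sig M t (sig M t v) = v := by
  have h1 : phiF M t (Finsupp.single t 1) = 2 := by
    rw [phiF_single, kappa_self]; ring
  rw [sig_apply, sig_apply, map_sub, map_smul, h1, smul_eq_mul]
  module

theorem sig_fix {t : B} {v : B →₀ ℂ} (h : phiF M t v = 0) : sig M t v = v := by
  rw [sig_apply, h, zero_smul, sub_zero]

theorem sig_mul_pow_fix {s t : B} {v : B →₀ ℂ} (hs : sig M s v = v) (ht : sig M t v = v)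
    (k : ℕ) : ((sig M s * sig M t) ^ k) v = v := by
  induction k with
  | zero => simp
  | succ n ih => rw [pow_succ, Module.End.mul_apply, Module.End.mul_apply, ht, hs, ih]

section Pair

variable (i j : B)

/-- `ζ^n - ζ^(-n)`, a sine analogue. -/
def UU (n : ℤ) : ℂ := zeta M i j ^ n - zeta M i j ^ (-n)

theorem UU_neg (n : ℤ) : UU M i j (-n) = -UU M i j n := by
  unfold UU; rw [neg_neg]; ring

theorem UU_rec1 (n : ℤ) :
    2 * cc M i j * UU M i j n - UU M i j (n - 1) = UU M i j (n + 1) := by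
  have hz : zeta M i j ≠ 0 := zeta_ne_zero M i j
  unfold UU cc
  rw [show -(n+1) = -n + -1 by ring, show n - 1 = n + -1 by ring,
    show -(n + -1) = -n + 1 by ring]
  rw [zpow_add₀ hz, zpow_add₀ hz, zpow_add₀ hz, zpow_add₀ hz]
  simp only [zpow_one, zpow_neg]
  have ha : zeta M i j ^ n ≠ 0 := zpow_ne_zero _ hz
  field_simp
  ring

theorem UU_rec2 (n : ℤ) :
    (4 * cc M i j ^ 2 - 1) * UU M i j n - 2 * cc M i j * UU M i j (n - 1) = UU M i j (n + 2) := by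
  have h1 := UU_rec1 M i j n
  have h2 := UU_rec1 M i j (n + 1)
  rw [add_sub_cancel_right] at h2
  rw [show n + 2 = n + 1 + 1 by ring, ← h2, ← h1]
  ring

end Pair

section PairNe

variable {i j : B} (hij : i ≠ j)

theorem sig_es_es : sig M i (Finsupp.single i (1:ℂ)) = -Finsupp.single i (1:ℂ) := by
  rw [sig_apply, phiF_single, kappa_self]
  module

theorem sig_es_et : sig M i (Finsupp.single j (1:ℂ)) =
    Finsupp.single j (1:ℂ) + (2 * cc M i j) • Finsupp.single i (1:ℂ) := by
  rw [sig_apply, phiF_single]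
  unfold kappa
  module

/-- the rotation `A = σ_i σ_j`. -/
theorem A_es : (sig M i * sig M j) (Finsupp.single i (1:ℂ)) =
    (4 * cc M i j ^ 2 - 1) • Finsupp.single i (1:ℂ)
      + (2 * cc M i j) • Finsupp.single j (1:ℂ) := by
  rw [Module.End.mul_apply]
  have h1 : sig M j (Finsupp.single i (1:ℂ)) =
      Finsupp.single i (1:ℂ) + (2 * cc M j i) • Finsupp.single j (1:ℂ) := sig_es_et M
  rw [h1, map_add, map_smul, sig_es_es, sig_es_et]
  rw [show cc M j i = cc M i j by unfold cc zeta; rw [M.symmetric]]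
  module

theorem A_et : (sig M i * sig M j) (Finsupp.single j (1:ℂ)) =
    (-(2 * cc M i j)) • Finsupp.single i (1:ℂ) + (-1 : ℂ) • Finsupp.single j (1:ℂ) := by
  rw [Module.End.mul_apply, sig_es_es, map_neg, sig_es_et]
  module

/-- power formula (division-free form). -/
theorem A_pow (k : ℕ) :
    (UU M i j 1) • (((sig M i * sig M j) ^ k) (Finsupp.single i (1:ℂ))) =
      (UU M i j (2*k+1)) • Finsupp.single i (1:ℂ)
        + (UU M i j (2*k)) • Finsupp.single j (1:ℂ) ∧
    (UU M i j 1) • (((sig M i * sig M j) ^ k) (Finsupp.single j (1:ℂ))) =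
      (-(UU M i j (2*k))) • Finsupp.single i (1:ℂ)
        + (-(UU M i j (2*k-1))) • Finsupp.single j (1:ℂ) := by
  induction k with
  | zero =>
    have h0 : UU M i j 0 = 0 := by unfold UU; norm_num
    have hm1 : UU M i j (-1) = -UU M i j 1 := UU_neg M i j 1
    constructor
    · push_cast
      simp only [pow_zero, Module.End.one_apply, mul_zero, zero_add]
      rw [h0]
      module
    · push_cast
      simp only [pow_zero, Module.End.one_apply, mul_zero, zero_add, zero_sub]
      rw [h0, hm1]
      module
  | succ n ih =>
    obtain ⟨ih1, ih2⟩ := ih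
    have hstep : ∀ v : B →₀ ℂ, ((sig M i * sig M j) ^ (n+1)) v
        = ((sig M i * sig M j) ^ n) ((sig M i * sig M j) v) := by
      intro v
      rw [pow_succ, Module.End.mul_apply]
    have r1 : UU M i j (2*((n:ℤ)+1)+1)
        = (4 * cc M i j ^ 2 - 1) * UU M i j (2*n+1) - 2 * cc M i j * UU M i j (2*n) := by
      have h := UU_rec2 M i j (2*n+1)
      rw [show (2*(n:ℤ)+1-1 : ℤ) = 2*n by ring,
        show (2*(n:ℤ)+1+2 : ℤ) = 2*((n:ℤ)+1)+1 by ring] at h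
      linear_combination -h
    have r2 : UU M i j (2*((n:ℤ)+1))
        = (4 * cc M i j ^ 2 - 1) * UU M i j (2*n) - 2 * cc M i j * UU M i j (2*n-1) := by
      have h := UU_rec2 M i j (2*n)
      rw [show (2*(n:ℤ)+2 : ℤ) = 2*((n:ℤ)+1) by ring] at h
      linear_combination -h
    have r3 : UU M i j (2*((n:ℤ)+1))
        = 2 * cc M i j * UU M i j (2*n+1) - UU M i j (2*n) := by
      have h := UU_rec1 M i j (2*n+1)
      rw [show (2*(n:ℤ)+1-1 : ℤ) = 2*n by ring,
        show (2*(n:ℤ)+1+1 : ℤ) = 2*((n:ℤ)+1) by ring] at h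
      linear_combination -h
    have r4 : UU M i j (2*((n:ℤ)+1)-1)
        = 2 * cc M i j * UU M i j (2*n) - UU M i j (2*n-1) := by
      have h := UU_rec1 M i j (2*n)
      rw [show (2*(n:ℤ)+1 : ℤ) = 2*((n:ℤ)+1)-1 by ring] at h
      linear_combination -h
    constructor
    · rw [hstep, A_es, map_add, map_smul, map_smul]
      push_cast
      rw [smul_add, smul_comm (UU M i j 1) (4 * cc M i j ^ 2 - 1),
        smul_comm (UU M i j 1) (2 * cc M i j), ih1, ih2, r1, r2]
      module
    · rw [hstep, A_et, map_add, map_smul, map_smul]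
      push_cast
      rw [smul_add, smul_comm (UU M i j 1) (-(2 * cc M i j)),
        smul_comm (UU M i j 1) (-1 : ℂ), ih1, ih2, r3, r4]
      module

end PairNe

end Geo2
end CoxShortProof

namespace CoxShortProof
open CoxeterSystem List Complex

noncomputable section Geo3

variable {B : Type*} (M : CoxeterMatrix B)

theorem UU_one_ne_zero {i j : B} (h2 : 2 ≤ M i j) : UU M i j 1 ≠ 0 := by
  intro h
  apply zeta_sq_ne_one M h2
  have hz := zeta_ne_zero M i j
  unfold UU at h
  simp only [zpow_one, zpow_neg] at h
  have h' : zeta M i j = (zeta M i j)⁻¹ := by linear_combination h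
  rw [sq]
  nth_rewrite 2 [h']
  exact mul_inv_cancel₀ hz

theorem zeta_pow_two_m {i j : B} (hm : M i j ≠ 0) :
    zeta M i j ^ (2 * (M i j : ℤ)) = 1 := by
  have : (2 * (M i j : ℤ)) = ((M i j * 2 : ℕ) : ℤ) := by push_cast; ring
  rw [this, zpow_natCast, pow_mul, zeta_pow M hm, neg_one_sq]

theorem UU_two_m (i j : B) (hm : M i j ≠ 0) : UU M i j (2 * (M i j : ℤ)) = 0 := by
  unfold UU
  rw [zeta_pow_two_m M hm, zpow_neg, zeta_pow_two_m M hm, inv_one, sub_self]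

theorem UU_add_two_m (i j : B) (hm : M i j ≠ 0) (n : ℤ) :
    UU M i j (n + 2 * (M i j : ℤ)) = UU M i j n := by
  have hz := zeta_ne_zero M i j
  unfold UU
  rw [zpow_add₀ hz, zeta_pow_two_m M hm, mul_one, neg_add, zpow_add₀ hz, zpow_neg, zpow_neg,
    zeta_pow_two_m M hm, inv_one, mul_one]

theorem UU_two_m_add_one (i j : B) (hm : M i j ≠ 0) :
    UU M i j (2 * (M i j : ℤ) + 1) = UU M i j 1 := by
  rw [show 2 * (M i j : ℤ) + 1 = 1 + 2 * (M i j : ℤ) by ring, UU_add_two_m M i j hm]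

theorem UU_two_m_sub_one (i j : B) (hm : M i j ≠ 0) :
    UU M i j (2 * (M i j : ℤ) - 1) = -UU M i j 1 := by
  rw [show 2 * (M i j : ℤ) - 1 = -1 + 2 * (M i j : ℤ) by ring, UU_add_two_m M i j hm, UU_neg]

theorem UU_m_add_one (i j : B) (hm : M i j ≠ 0) :
    UU M i j ((M i j : ℤ) + 1) = -UU M i j 1 := by
  have hz := zeta_ne_zero M i j
  have hp : zeta M i j ^ ((M i j : ℕ) : ℤ) = -1 := by
    rw [zpow_natCast]; exact zeta_pow M hm
  unfold UU
  rw [zpow_add₀ hz, hp, neg_add, zpow_add₀ hz, zpow_neg, hp, zpow_neg]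
  simp only [zpow_one, inv_neg, inv_one]
  ring

theorem one_sub_cc_sq {i j : B} : (1 : ℂ) - cc M i j ^ 2 = -(UU M i j 1) ^ 2 / 4 := by
  have hz := zeta_ne_zero M i j
  unfold cc UU
  simp only [zpow_one, zpow_neg]
  field_simp
  ring

theorem geo_liftable : M.IsLiftable (fun t => sig M t) := by
  intro s t
  rcases eq_or_ne s t with rfl | hst
  · rw [M.diagonal, pow_one]
    exact LinearMap.ext fun v => by
      rw [Module.End.mul_apply, sig_sig, Module.End.one_apply]
  rcases eq_or_ne (M s t) 0 with h0 | h0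
  · rw [h0, pow_zero]
  have h2 : 2 ≤ M s t := by have := M.off_diagonal s t hst; omega
  have hU1 := UU_one_ne_zero M h2
  have hD : (1 : ℂ) - cc M s t ^ 2 ≠ 0 := by
    rw [one_sub_cc_sq]
    simp [hU1]
  apply LinearMap.ext; intro v
  set c := cc M s t with hc
  set p := phiF M s v with hp
  set q := phiF M t v with hq
  set a := (p + c*q)/(2*(1-c^2)) with ha
  set b := (q + c*p)/(2*(1-c^2)) with hb
  set es : B →₀ ℂ := Finsupp.single s 1 with hes
  set et : B →₀ ℂ := Finsupp.single t 1 with het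
  set r : B →₀ ℂ := v - a • es - b • et with hr
  have hkst : kappa M s t = -c := rfl
  have hkts : kappa M t s = -c := by rw [kappa_symm]; rfl
  have hps : phiF M s r = 0 := by
    rw [hr, map_sub, map_sub, map_smul, map_smul, hes, het, phiF_single, phiF_single,
      kappa_self, hkst, ← hp, ha, hb, smul_eq_mul, smul_eq_mul]
    field_simp
    ring
  have hpt : phiF M t r = 0 := by
    rw [hr, map_sub, map_sub, map_smul, map_smul, hes, het, phiF_single, phiF_single,
      kappa_self, hkts, ← hq, hb, ha, smul_eq_mul, smul_eq_mul]
    field_simp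
    ring
  have hfix := sig_mul_pow_fix M (sig_fix M hps) (sig_fix M hpt) (M s t)
  have hAes : ((sig M s * sig M t) ^ (M s t)) es = es := by
    apply smul_right_injective _ hU1
    show UU M s t 1 • _ = UU M s t 1 • es
    rw [(A_pow M (M s t)).1, UU_two_m M s t h0, UU_two_m_add_one M s t h0]
    module
  have hAet : ((sig M s * sig M t) ^ (M s t)) et = et := by
    apply smul_right_injective _ hU1
    show UU M s t 1 • _ = UU M s t 1 • et
    rw [(A_pow M (M s t)).2, UU_two_m M s t h0, UU_two_m_sub_one M s t h0]
    module
  have hv : v = a • es + b • et + r := by rw [hr]; module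
  rw [Module.End.one_apply, hv, map_add, map_add, map_smul, map_smul, hAes, hAet, hfix]

theorem A_pow_zero {i j : B} (h0 : M i j = 0) (k : ℕ) :
    ((sig M i * sig M j) ^ k) (Finsupp.single i (1:ℂ)) =
      ((2*k+1 : ℂ)) • Finsupp.single i (1:ℂ) + ((2*k : ℂ)) • Finsupp.single j (1:ℂ) ∧
    ((sig M i * sig M j) ^ k) (Finsupp.single j (1:ℂ)) =
      (-(2*k : ℂ)) • Finsupp.single i (1:ℂ) + (-(2*k-1 : ℂ)) • Finsupp.single j (1:ℂ) := by
  have hc : cc M i j = 1 := by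
    unfold cc; rw [zeta_zero M h0]; norm_num
  induction k with
  | zero =>
    constructor
    · push_cast; simp only [pow_zero, Module.End.one_apply]; module
    · push_cast; simp only [pow_zero, Module.End.one_apply]; module
  | succ n ih =>
    obtain ⟨ih1, ih2⟩ := ih
    have hstep : ∀ v : B →₀ ℂ, ((sig M i * sig M j) ^ (n+1)) v
        = ((sig M i * sig M j) ^ n) ((sig M i * sig M j) v) := by
      intro v
      rw [pow_succ, Module.End.mul_apply]
    constructor
    · rw [hstep, A_es, hc, map_add, map_smul, map_smul, ih1, ih2]
      push_cast
      module
    · rw [hstep, A_et, hc, map_add, map_smul, map_smul, ih1, ih2]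
      push_cast
      module

theorem geo_order {i j : B} (hij : i ≠ j) {d : ℕ} (hd : 0 < d)
    (hdm : M i j = 0 ∨ d < M i j) : (sig M i * sig M j) ^ d ≠ 1 := by
  classical
  intro hEq
  have hes : ((sig M i * sig M j) ^ d) (Finsupp.single i (1:ℂ)) = Finsupp.single i 1 := by
    rw [hEq, Module.End.one_apply]
  have coordj : ∀ (x y : ℂ),
      (x • Finsupp.single i (1:ℂ) + y • Finsupp.single j (1:ℂ)) j = y := by
    intro x y
    rw [Finsupp.add_apply, Finsupp.smul_apply, Finsupp.smul_apply,
      Finsupp.single_apply, Finsupp.single_apply, if_neg hij, if_pos rfl]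
    simp
  have coordi : ∀ (x y : ℂ),
      (x • Finsupp.single i (1:ℂ) + y • Finsupp.single j (1:ℂ)) i = x := by
    intro x y
    rw [Finsupp.add_apply, Finsupp.smul_apply, Finsupp.smul_apply,
      Finsupp.single_apply, Finsupp.single_apply, if_pos rfl, if_neg (Ne.symm hij)]
    simp
  rcases hdm with h0 | hlt
  · have h := (A_pow_zero M h0 d).1
    rw [hes] at h
    have hj := congrArg (fun f : B →₀ ℂ => f j) h
    simp only [coordj] at hj
    rw [Finsupp.single_apply, if_neg hij] at hj
    have hd0 : (d : ℂ) = 0 := by linear_combination -hj / 2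
    have : d = 0 := by exact_mod_cast hd0
    omega
  · have h2 : 2 ≤ M i j := by have := M.off_diagonal i j hij; omega
    have hU1 := UU_one_ne_zero M h2
    have hm0 : M i j ≠ 0 := by omega
    have h := (A_pow M (i := i) (j := j) d).1
    rw [hes] at h
    have hj := congrArg (fun f : B →₀ ℂ => f j) h
    simp only [coordj] at hj
    rw [Finsupp.smul_apply, Finsupp.single_apply, if_neg hij, smul_eq_mul, mul_zero] at hj
    -- hj : 0 = UU M i j (2 * d)
    have hz := zeta_ne_zero M i j
    have h4d : zeta M i j ^ (4 * d) = 1 := by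
      have : zeta M i j ^ ((2*d : ℕ) : ℤ) = zeta M i j ^ (-((2*d : ℕ) : ℤ)) := by
        have := hj.symm
        unfold UU at this
        have h2d : ((2*d : ℕ) : ℤ) = 2 * (d : ℤ) := by push_cast; ring
        rw [sub_eq_zero] at this
        rw [h2d]
        exact this
      have h' := congrArg (fun z => z * zeta M i j ^ ((2*d : ℕ) : ℤ)) this
      simp only [zpow_neg, inv_mul_cancel₀ (zpow_ne_zero _ hz), ← zpow_add₀ hz] at h'
      rw [show ((2*d : ℕ) : ℤ) + ((2*d : ℕ) : ℤ) = ((4*d : ℕ) : ℤ) by push_cast; ring] at h'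
      rw [zpow_natCast] at h'
      exact h'
    have h2d : 2 * d = M i j := zeta_pow_four_d M h2 hd hlt h4d
    have hi := congrArg (fun f : B →₀ ℂ => f i) h
    simp only [coordi] at hi
    rw [Finsupp.smul_apply, Finsupp.single_apply, if_pos rfl, smul_eq_mul, mul_one] at hi
    -- hi : UU 1 = UU (2d+1)
    have : (2 * (d:ℤ) + 1) = ((M i j : ℤ) + 1) := by
      have : ((2*d : ℕ) : ℤ) = ((M i j : ℕ) : ℤ) := by exact_mod_cast h2d
      push_cast at this
      omega
    rw [this, UU_m_add_one M i j hm0] at hi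
    apply hU1
    linear_combination hi / 2

end Geo3
end CoxShortProof


namespace CoxShortProof
open CoxeterSystem List

section Parity

variable {B W : Type*} [Group W] {M : CoxeterMatrix B} (cs : CoxeterSystem M W)
variable [DecidableEq W]

/-- the parity flip attached to a generator. -/
def pflip (i : B) : W × ZMod 2 → W × ZMod 2 :=
  fun p => (cs.simple i * p.1 * cs.simple i, p.2 + if p.1 = cs.simple i then 1 else 0)

theorem sandwich (j : B) (v w : W) :
    cs.simple j * v * cs.simple j = w ↔ v = cs.simple j * w * cs.simple j := by
  constructor
  · intro h
    have h2 : v = (cs.simple j)⁻¹ * w * (cs.simple j)⁻¹ := by rw [← h]; group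
    rwa [cs.inv_simple] at h2
  · intro h
    rw [h]
    have h2 : cs.simple j * (cs.simple j * w * cs.simple j) * cs.simple j
        = (cs.simple j * cs.simple j) * w * (cs.simple j * cs.simple j) := by group
    rw [h2, cs.simple_mul_simple_self, one_mul, mul_one]

theorem conj_simple_eq_iff (i : B) (u : W) :
    cs.simple i * u * cs.simple i = cs.simple i ↔ u = cs.simple i := by
  rw [sandwich cs i u (cs.simple i), cs.simple_mul_simple_self, one_mul]

theorem pflip_invol (i : B) : Function.Involutive (pflip cs i) := by
  rintro ⟨u, e⟩
  unfold pflip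
  simp only
  have h1 : cs.simple i * (cs.simple i * u * cs.simple i) * cs.simple i = u := by
    rw [← mul_assoc, ← mul_assoc, cs.simple_mul_simple_self, one_mul, mul_assoc,
      cs.simple_mul_simple_self, mul_one]
  rw [Prod.mk.injEq]
  refine ⟨h1, ?_⟩
  by_cases hu : u = cs.simple i
  · rw [if_pos hu, if_pos ((conj_simple_eq_iff cs i u).mpr hu)]
    have : (1 + 1 : ZMod 2) = 0 := by decide
    rw [add_assoc, this, add_zero]
  · rw [if_neg hu, if_neg (fun h => hu ((conj_simple_eq_iff cs i u).mp h))]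
    rw [add_zero, add_zero]

/-- the parity permutation attached to a generator. -/
def pperm (i : B) : Equiv.Perm (W × ZMod 2) := (pflip_invol cs i).toPerm

theorem pperm_apply (i : B) (p : W × ZMod 2) : pperm cs i p = pflip cs i p := rfl

theorem conj_simple_pow (i i' : B) (r : ℕ) :
    cs.simple i' * (cs.simple i * cs.simple i') ^ r * cs.simple i'
      = ((cs.simple i * cs.simple i')⁻¹) ^ r := by
  have hc : ∀ x : W, cs.simple i' * x * cs.simple i' = MulAut.conj (cs.simple i') x := by
    intro x
    rw [MulAut.conj_apply, cs.inv_simple]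
  rw [hc, map_pow, ← hc]
  congr 1
  rw [mul_inv_rev, cs.inv_simple, cs.inv_simple, mul_assoc, mul_assoc,
    cs.simple_mul_simple_self, mul_one]

theorem conj_eq_iff (g w u : W) : g * u * g⁻¹ = w ↔ u = g⁻¹ * w * g := by
  constructor
  · rintro rfl; group
  · rintro rfl; group

theorem conj_si' (i i' : B) (n : ℕ) :
    ((cs.simple i * cs.simple i') ^ n)⁻¹ * cs.simple i' * (cs.simple i * cs.simple i') ^ n
      = ((cs.simple i * cs.simple i')⁻¹) ^ (2 * n) * cs.simple i' := by
  set a := cs.simple i * cs.simple i' with ha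
  have key : cs.simple i' * a ^ n = (a⁻¹) ^ n * cs.simple i' := by
    have h := conj_simple_pow cs i i' n
    have := congrArg (fun z => z * cs.simple i') h
    rwa [mul_assoc, mul_assoc, cs.simple_mul_simple_self, mul_one] at this
  rw [mul_assoc, key, ← mul_assoc, ← inv_pow, ← pow_add,
    show n + n = 2 * n from by omega]

theorem conj_si'si (i i' : B) (n : ℕ) :
    ((cs.simple i * cs.simple i') ^ n)⁻¹
        * (cs.simple i' * cs.simple i * cs.simple i') * (cs.simple i * cs.simple i') ^ n
      = ((cs.simple i * cs.simple i')⁻¹) ^ (2 * n + 1) * cs.simple i' := by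
  set a := cs.simple i * cs.simple i' with ha
  have h0 : cs.simple i' * cs.simple i * cs.simple i' = a⁻¹ * cs.simple i' := by
    rw [ha, mul_inv_rev, cs.inv_simple, cs.inv_simple]
  have key : cs.simple i' * a ^ n = (a⁻¹) ^ n * cs.simple i' := by
    have h := conj_simple_pow cs i i' n
    have := congrArg (fun z => z * cs.simple i') h
    rwa [mul_assoc, mul_assoc, cs.simple_mul_simple_self, mul_one] at this
  rw [h0, mul_assoc, mul_assoc, key, ← mul_assoc, ← mul_assoc, ← inv_pow, ← pow_succ,
    ← pow_add, show n + 1 + n = 2 * n + 1 from by omega]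

theorem pperm_pair_pow (i i' : B) (n : ℕ) (u : W) (e : ZMod 2) :
    ((pperm cs i * pperm cs i') ^ n) (u, e) =
      ((cs.simple i * cs.simple i') ^ n * u * (((cs.simple i * cs.simple i') ^ n)⁻¹),
        e + ∑ r ∈ Finset.range (2 * n),
          (if u = ((cs.simple i * cs.simple i')⁻¹) ^ r * cs.simple i' then (1 : ZMod 2) else 0))
      := by
  set a := cs.simple i * cs.simple i' with ha
  induction n with
  | zero => simp
  | succ n ih =>
    rw [pow_succ', Equiv.Perm.mul_apply, ih]
    rw [Equiv.Perm.mul_apply, pperm_apply, pperm_apply]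
    unfold pflip
    simp only
    rw [Prod.mk.injEq]
    constructor
    · have hinv : a⁻¹ = cs.simple i' * cs.simple i := by
        rw [ha, mul_inv_rev, cs.inv_simple, cs.inv_simple]
      rw [pow_succ', mul_inv_rev, hinv, ha]
      group
    · have hc1 := conj_si' cs i i' n
      rw [← ha] at hc1
      have hc2 := conj_si'si cs i i' n
      rw [← ha] at hc2
      have c1 : (a ^ n * u * (a ^ n)⁻¹ = cs.simple i')
          ↔ (u = (a⁻¹) ^ (2 * n) * cs.simple i') := by
        rw [conj_eq_iff, hc1]
      have c2 : (cs.simple i' * (a ^ n * u * (a ^ n)⁻¹) * cs.simple i' = cs.simple i)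
          ↔ (u = (a⁻¹) ^ (2 * n + 1) * cs.simple i') := by
        rw [sandwich cs i' _ (cs.simple i), conj_eq_iff, hc2]
      rw [if_congr c1 rfl rfl, if_congr c2 rfl rfl,
        show 2 * (n + 1) = (2 * n + 1) + 1 by ring, Finset.sum_range_succ,
        Finset.sum_range_succ]
      ring

theorem pperm_liftable : M.IsLiftable (fun i => pperm cs i) := by
  intro i i'
  apply Equiv.ext
  rintro ⟨u, e⟩
  simp only [Equiv.Perm.one_apply]
  rw [pperm_pair_pow]
  rw [Prod.mk.injEq]
  have hrel : (cs.simple i * cs.simple i') ^ M i i' = 1 := cs.simple_mul_simple_pow i i'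
  constructor
  · rw [hrel]; group
  · have hrel' : ((cs.simple i * cs.simple i')⁻¹) ^ M i i' = 1 := by
      rw [inv_pow, hrel, inv_one]
    rw [two_mul, Finset.sum_range_add]
    have : ∀ r, ((cs.simple i * cs.simple i')⁻¹) ^ (M i i' + r)
        = ((cs.simple i * cs.simple i')⁻¹) ^ r := by
      intro r
      rw [pow_add, hrel', one_mul]
    simp only [this]
    have h2 : ∀ x : ZMod 2, x + x = 0 := by decide
    rw [h2, add_zero]

/-- the parity representation. -/
def prep : W →* Equiv.Perm (W × ZMod 2) :=
  cs.lift ⟨fun i => pperm cs i, pperm_liftable cs⟩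

theorem prep_simple (i : B) : prep cs (cs.simple i) = pperm cs i :=
  cs.lift_apply_simple (pperm_liftable cs) i

theorem prep_wordProd (ω : List B) (u : W) (e : ZMod 2) :
    prep cs (cs.wordProd ω) (u, e) =
      (cs.wordProd ω * u * (cs.wordProd ω)⁻¹,
        e + (((cs.rightInvSeq ω).count u : ℕ) : ZMod 2)) := by
  induction ω generalizing e with
  | nil => simp
  | cons i ω ih =>
    rw [wordProd_cons, map_mul, Equiv.Perm.mul_apply, ih, prep_simple, pperm_apply]
    unfold pflip
    simp only
    rw [Prod.mk.injEq]
    constructor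
    · rw [mul_inv_rev, cs.inv_simple]
      group
    · have hris : cs.rightInvSeq (i :: ω)
          = ((cs.wordProd ω)⁻¹ * cs.simple i * cs.wordProd ω) :: cs.rightInvSeq ω := rfl
      rw [hris, List.count_cons]
      have hiff : (cs.wordProd ω * u * (cs.wordProd ω)⁻¹ = cs.simple i)
          ↔ ((cs.wordProd ω)⁻¹ * cs.simple i * cs.wordProd ω = u) := by
        rw [conj_eq_iff, eq_comm, mul_assoc]
      push_cast
      rw [add_assoc]
      congr 1
      rw [if_congr hiff rfl rfl]
      by_cases h : (cs.wordProd ω)⁻¹ * cs.simple i * cs.wordProd ω = u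
      · rw [if_pos h, if_pos (by exact beq_iff_eq.mpr h)]
      · rw [if_neg h, if_neg (by simpa using h)]

theorem count_parity_eq {ω₁ ω₂ : List B} (h : cs.wordProd ω₁ = cs.wordProd ω₂) (u : W) :
    (((cs.rightInvSeq ω₁).count u : ℕ) : ZMod 2)
      = (((cs.rightInvSeq ω₂).count u : ℕ) : ZMod 2) := by
  have h1 := prep_wordProd cs ω₁ u 0
  have h2 := prep_wordProd cs ω₂ u 0
  rw [h] at h1
  rw [h1] at h2
  have := (Prod.mk.injEq _ _ _ _).mp h2
  simpa using this.2

theorem mem_rightInvSeq_of_isRightDescent {ω : List B} {x : B}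
    (h : cs.IsRightDescent (cs.wordProd ω) x) : cs.simple x ∈ cs.rightInvSeq ω := by
  obtain ⟨τ, hτlen, hτ⟩ := cs.exists_reduced_word (cs.wordProd ω * cs.simple x)
  have hω' : cs.wordProd (τ ++ [x]) = cs.wordProd ω := by
    rw [wordProd_append, wordProd_singleton, ← hτ, mul_assoc, cs.simple_mul_simple_self,
      mul_one]
  have hlen : cs.length (cs.wordProd ω * cs.simple x) + 1 = cs.length (cs.wordProd ω) :=
    cs.isRightDescent_iff.mp h
  have hred : cs.IsReduced (τ ++ [x]) := by
    unfold CoxeterSystem.IsReduced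
    rw [hω', List.length_append, List.length_singleton, ← (hτlen : cs.length (cs.wordProd τ) = τ.length), ← hτ]
    omega
  have hnodup := hred.nodup_rightInvSeq
  have hmem : cs.simple x ∈ cs.rightInvSeq (τ ++ [x]) := by
    rw [← List.concat_eq_append, cs.rightInvSeq_concat]
    rw [List.concat_eq_append]
    exact List.mem_append_right _ (List.mem_singleton_self _)
  have hcnt1 : (cs.rightInvSeq (τ ++ [x])).count (cs.simple x) = 1 :=
    List.count_eq_one_of_mem hnodup hmem
  have hcount := count_parity_eq cs hω' (cs.simple x)
  rw [hcnt1] at hcount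
  by_contra hnotmem
  rw [List.count_eq_zero_of_not_mem hnotmem] at hcount
  exact absurd hcount (by decide)

/-- strong exchange (deletion form, arbitrary word). -/
theorem exists_eraseIdx_of_isRightDescent {ω : List B} {x : B}
    (h : cs.IsRightDescent (cs.wordProd ω) x) :
    ∃ t, t < ω.length ∧ cs.wordProd ω * cs.simple x = cs.wordProd (ω.eraseIdx t) := by
  obtain ⟨t, ht, hEq⟩ := List.mem_iff_getElem.mp (mem_rightInvSeq_of_isRightDescent cs h)
  refine ⟨t, by simpa using ht, ?_⟩
  have hgetD : (cs.rightInvSeq ω).getD t 1 = cs.simple x := by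
    rw [List.getD_eq_getElem _ _ ht, hEq]
  rw [← hgetD]
  exact cs.wordProd_mul_getD_rightInvSeq ω t

end Parity
end CoxShortProof


namespace CoxShortProof
open CoxeterSystem List

section Bridge
variable {B W : Type*} [Group W] {M : CoxeterMatrix B} (cs : CoxeterSystem M W)

theorem pair_pow_ne_one {i j : B} (hij : i ≠ j) {d : ℕ} (hd : 0 < d)
    (hdm : M i j = 0 ∨ d < M i j) : (cs.simple i * cs.simple j) ^ d ≠ 1 := by
  intro h
  apply geo_order M hij hd hdm
  have h2 := congrArg (cs.lift ⟨fun t => sig M t, geo_liftable M⟩) h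
  rwa [map_pow, map_mul, cs.lift_apply_simple, cs.lift_apply_simple, map_one] at h2

end Bridge
end CoxShortProof


namespace CoxShortProof
open CoxeterSystem List

section Comb

variable {B W : Type*} [Group W] {M : CoxeterMatrix B} (cs : CoxeterSystem M W)
variable [DecidableEq W]

theorem isReduced_nil : cs.IsReduced ([] : List B) := by
  simp [CoxeterSystem.IsReduced]

theorem not_isReduced_double (l₁ : List B) (c : B) (l₂ : List B) :
    ¬ cs.IsReduced (l₁ ++ c :: c :: l₂) := by
  intro h
  have hprod : cs.wordProd (l₁ ++ c :: c :: l₂) = cs.wordProd (l₁ ++ l₂) := by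
    rw [wordProd_append, wordProd_append, wordProd_cons, wordProd_cons,
      cs.simple_mul_simple_cancel_left]
  have hle := cs.length_wordProd_le (l₁ ++ l₂)
  unfold CoxeterSystem.IsReduced at h
  rw [hprod] at h
  rw [h] at hle
  simp only [List.length_append, List.length_cons] at hle
  omega

/-- every non-reduced word can be shortened by 2 keeping the product and the alphabet. -/
theorem shorten {ω : List B} (h : ¬ cs.IsReduced ω) :
    ∃ ω' : List B, cs.wordProd ω' = cs.wordProd ω ∧ ω'.length + 2 = ω.length ∧
      ∀ x ∈ ω', x ∈ ω := by
  classical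
  have hex : ∃ k, ¬ cs.IsReduced (ω.take k) := ⟨ω.length, by rwa [List.take_length]⟩
  have hk : ¬ cs.IsReduced (ω.take (Nat.find hex)) := Nat.find_spec hex
  have hkmin : ∀ m, m < Nat.find hex → cs.IsReduced (ω.take m) := fun m hm =>
    not_not.mp (Nat.find_min hex hm)
  have hk0 : Nat.find hex ≠ 0 := by
    intro h0
    rw [h0, List.take_zero] at hk
    exact hk (isReduced_nil cs)
  have hkle : Nat.find hex ≤ ω.length := by
    by_contra hgt
    push_neg at hgt
    have h1 := hkmin ω.length (by omega)
    rw [List.take_length] at h1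
    rw [List.take_of_length_le (by omega)] at hk
    exact hk h1
  obtain ⟨k', hk'⟩ : ∃ k', Nat.find hex = k' + 1 := ⟨Nat.find hex - 1, by omega⟩
  rw [hk'] at hk
  have hk'lt : k' < ω.length := by omega
  have hρ : cs.IsReduced (ω.take k') := hkmin k' (by omega)
  have htake : ω.take (k' + 1) = ω.take k' ++ [ω[k']] := by
    rw [List.take_succ]
    simp [List.getElem?_eq_getElem hk'lt]
  set ρ := ω.take k' with hρdef
  set c := ω[k'] with hcdef
  have hρlen : ρ.length = k' := by
    rw [hρdef, List.length_take]
    omega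
  have hdesc : cs.IsRightDescent (cs.wordProd ρ) c := by
    have hne : cs.length (cs.wordProd ρ * cs.simple c) ≠ cs.length (cs.wordProd ρ) + 1 := by
      intro hEq
      apply hk
      unfold CoxeterSystem.IsReduced
      rw [htake, wordProd_append, wordProd_singleton, hEq, hρ, hρlen]
      simp only [List.length_append, List.length_singleton]
      omega
    rcases cs.length_mul_simple (cs.wordProd ρ) c with h1 | h1
    · exact absurd h1 hne
    · unfold CoxeterSystem.IsRightDescent
      omega
  obtain ⟨t, ht, hdel⟩ := exists_eraseIdx_of_isRightDescent cs hdesc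
  refine ⟨ρ.eraseIdx t ++ ω.drop (k' + 1), ?_, ?_, ?_⟩
  · rw [wordProd_append, ← hdel,
      show cs.wordProd ρ * cs.simple c = cs.wordProd (ρ ++ [c]) by
        rw [wordProd_append, wordProd_singleton],
      ← htake, ← wordProd_append, List.take_append_drop]
  · have hlen' : (ρ.eraseIdx t).length + 1 = ρ.length := List.length_eraseIdx_add_one ht
    rw [List.length_append, List.length_drop]
    omega
  · intro x hx
    rcases List.mem_append.mp hx with hx | hx
    · exact List.take_subset k' ω (List.eraseIdx_subset hx)
    · exact List.drop_subset _ ω hx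

/-- every element given by a word has a reduced word over the same alphabet. -/
theorem exists_reduced_alphabet :
    ∀ (n : ℕ) (ω : List B), ω.length ≤ n →
      ∃ ζ : List B, cs.wordProd ζ = cs.wordProd ω ∧ cs.IsReduced ζ ∧ ∀ x ∈ ζ, x ∈ ω := by
  intro n
  induction n with
  | zero =>
    intro ω hlen
    have : ω = [] := List.eq_nil_of_length_eq_zero (by omega)
    subst this
    exact ⟨[], rfl, isReduced_nil cs, by simp⟩
  | succ n ih =>
    intro ω hlen
    by_cases hred : cs.IsReduced ω
    · exact ⟨ω, rfl, hred, fun x hx => hx⟩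
    · obtain ⟨ω', hprod, hlen', hsub⟩ := shorten cs hred
      obtain ⟨ζ, hζprod, hζred, hζsub⟩ := ih ω' (by omega)
      exact ⟨ζ, by rw [hζprod, hprod], hζred, fun x hx => hsub x (hζsub x hx)⟩

theorem wordProd_mem_closure {i j : B} {ζ : List B} (hζ : ∀ x ∈ ζ, x = i ∨ x = j) :
    cs.wordProd ζ ∈ Subgroup.closure {cs.simple i, cs.simple j} := by
  induction ζ with
  | nil => rw [wordProd_nil]; exact one_mem _
  | cons x ζ ih =>
    rw [wordProd_cons]
    apply mul_mem
    · rcases hζ x (List.mem_cons_self) with rfl | rfl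
      · exact Subgroup.subset_closure (by simp)
      · exact Subgroup.subset_closure (by simp)
    · exact ih (fun y hy => hζ y (List.mem_cons_of_mem _ hy))

theorem exists_word_pair {i j : B} {z : W}
    (hz : z ∈ Subgroup.closure {cs.simple i, cs.simple j}) :
    ∃ ζ : List B, cs.wordProd ζ = z ∧ ∀ x ∈ ζ, x = i ∨ x = j := by
  induction hz using Subgroup.closure_induction with
  | mem x hx =>
    rcases hx with rfl | rfl
    · exact ⟨[i], by simp, by simp⟩
    · exact ⟨[j], by simp, by simp⟩
  | one => exact ⟨[], by simp, by simp⟩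
  | mul x y _ _ hx hy =>
    obtain ⟨ζ₁, h1, h1'⟩ := hx
    obtain ⟨ζ₂, h2, h2'⟩ := hy
    refine ⟨ζ₁ ++ ζ₂, by rw [wordProd_append, h1, h2], ?_⟩
    intro x hx
    rcases List.mem_append.mp hx with h | h
    · exact h1' x h
    · exact h2' x h
  | inv x _ hx =>
    obtain ⟨ζ, h1, h1'⟩ := hx
    refine ⟨ζ.reverse, by rw [wordProd_reverse, h1], ?_⟩
    intro x hx
    exact h1' x (List.mem_reverse.mp hx)

/-- a reduced word over a two-letter alphabet, whose product has a given minimal coset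
representative below it, adds lengths. -/
theorem rightInvSeq_append (l₁ l₂ : List B) :
    cs.rightInvSeq (l₁ ++ l₂)
      = (cs.rightInvSeq l₁).map (fun t => (cs.wordProd l₂)⁻¹ * t * cs.wordProd l₂)
        ++ cs.rightInvSeq l₂ := by
  induction l₁ with
  | nil => simp [rightInvSeq]
  | cons x l₁ ih =>
    show cs.rightInvSeq ((x :: l₁) ++ l₂) = _
    rw [List.cons_append]
    have h1 : cs.rightInvSeq (x :: (l₁ ++ l₂))
        = ((cs.wordProd (l₁ ++ l₂))⁻¹ * cs.simple x * cs.wordProd (l₁ ++ l₂))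
          :: cs.rightInvSeq (l₁ ++ l₂) := rfl
    have h2 : cs.rightInvSeq (x :: l₁)
        = ((cs.wordProd l₁)⁻¹ * cs.simple x * cs.wordProd l₁) :: cs.rightInvSeq l₁ := rfl
    rw [h1, ih, h2, List.map_cons, List.cons_append]
    congr 1
    rw [wordProd_append, mul_inv_rev]
    group

theorem length_min_mul_reduced {u : W} {i j : B}
    (hmin : ∀ z' ∈ Subgroup.closure {cs.simple i, cs.simple j},
      cs.length u ≤ cs.length (u * z'))
    {ζ : List B} (hζJ : ∀ x ∈ ζ, x = i ∨ x = j) (hζred : cs.IsReduced ζ) :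
    cs.length (u * cs.wordProd ζ) = cs.length u + ζ.length := by
  induction ζ using List.reverseRecOn with
  | nil => simp
  | append_singleton ζ' c ih =>
    have hζ'J : ∀ x ∈ ζ', x = i ∨ x = j := fun x hx => hζJ x (by simp [hx])
    have hζ'red : cs.IsReduced ζ' := by
      have := CoxeterSystem.IsReduced.take hζred ζ'.length
      rwa [List.take_left] at this
    have hIH := ih hζ'J hζ'red
    rw [wordProd_append, wordProd_singleton, ← mul_assoc, List.length_append,
      List.length_singleton]
    by_contra hne
    have hdesc : cs.IsRightDescent (u * cs.wordProd ζ') c := by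
      rcases cs.length_mul_simple (u * cs.wordProd ζ') c with h1 | h1
      · exact absurd (by omega : cs.length (u * cs.wordProd ζ' * cs.simple c)
          = cs.length u + (ζ'.length + 1)) hne
      · unfold CoxeterSystem.IsRightDescent; omega
    obtain ⟨υ, hυlen, hυ⟩ := cs.exists_reduced_word u
    have hρprod : cs.wordProd (υ ++ ζ') = u * cs.wordProd ζ' := by
      rw [wordProd_append, ← hυ]
    have hdesc' : cs.IsRightDescent (cs.wordProd (υ ++ ζ')) c := by rwa [hρprod]
    have hmem := mem_rightInvSeq_of_isRightDescent cs hdesc'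
    rw [rightInvSeq_append] at hmem
    rcases List.mem_append.mp hmem with hmem | hmem
    · -- the deleted letter is in `υ`: contradicts minimality of `u`
      obtain ⟨t, htmem, hteq⟩ := List.mem_map.mp hmem
      obtain ⟨r, hr, hrEq⟩ := List.mem_iff_getElem.mp htmem
      have hrlen : r < υ.length := by simpa using hr
      have hdel : u * t = cs.wordProd (υ.eraseIdx r) := by
        have := cs.wordProd_mul_getD_rightInvSeq υ r
        rwa [List.getD_eq_getElem _ _ hr, hrEq, ← hυ] at this
      have htJ : t ∈ Subgroup.closure {cs.simple i, cs.simple j} := by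
        have ht' : t = cs.wordProd ζ' * cs.simple c * (cs.wordProd ζ')⁻¹ := by
          rw [← hteq]; group
        rw [ht']
        apply mul_mem
        apply mul_mem
        · exact wordProd_mem_closure cs hζ'J
        · rcases hζJ c (by simp) with rfl | rfl
          · exact Subgroup.subset_closure (by simp)
          · exact Subgroup.subset_closure (by simp)
        · exact inv_mem (wordProd_mem_closure cs hζ'J)
      have hle := cs.length_wordProd_le (υ.eraseIdx r)
      rw [← hdel] at hle
      have hlen' : (υ.eraseIdx r).length + 1 = υ.length :=
        List.length_eraseIdx_add_one hrlen
      have := hmin t htJ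
      have hυl : cs.length u = υ.length := by rw [hυ]; exact hυlen
      omega
    · -- the deleted letter is in `ζ'`: contradicts reducedness of `ζ`
      obtain ⟨r, hr, hrEq⟩ := List.mem_iff_getElem.mp hmem
      have hrlen : r < ζ'.length := by simpa using hr
      have hdel : cs.wordProd ζ' * cs.simple c = cs.wordProd (ζ'.eraseIdx r) := by
        have := cs.wordProd_mul_getD_rightInvSeq ζ' r
        rwa [List.getD_eq_getElem _ _ hr, hrEq] at this
      have hle := cs.length_wordProd_le (ζ'.eraseIdx r)
      rw [← hdel] at hle
      have hζprod : cs.wordProd (ζ' ++ [c]) = cs.wordProd ζ' * cs.simple c := by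
        rw [wordProd_append, wordProd_singleton]
      have hred := hζred
      unfold CoxeterSystem.IsReduced at hred
      rw [hζprod] at hred
      have hlen' : (ζ'.eraseIdx r).length + 1 = ζ'.length :=
        List.length_eraseIdx_add_one hrlen
      simp only [List.length_append, List.length_singleton] at hred
      omega

end Comb
end CoxShortProof


namespace CoxShortProof
open CoxeterSystem List

section AltSec

variable {B W : Type*} [Group W] {M : CoxeterMatrix B} (cs : CoxeterSystem M W)
variable [DecidableEq W]

theorem alt_swap_mul (i j : B) :
    cs.simple j * (cs.simple i * cs.simple j)
      = (cs.simple i * cs.simple j)⁻¹ * cs.simple j := by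
  rw [mul_inv_rev, cs.inv_simple, cs.inv_simple, mul_assoc]

theorem alt_quot (i j : B) (k : ℕ) :
    (cs.wordProd (alternatingWord i j k))⁻¹ * cs.wordProd (alternatingWord i j (k+1))
      = ((cs.simple i * cs.simple j)⁻¹) ^ k * cs.simple j := by
  rcases Nat.even_or_odd k with he | ho
  · obtain ⟨m, hm⟩ := he
    rw [cs.prod_alternatingWord_eq_mul_pow, cs.prod_alternatingWord_eq_mul_pow,
      if_pos ⟨m, hm⟩, if_neg (by rw [Nat.even_add_one]; exact fun h => h ⟨m, hm⟩)]
    have h1 : k / 2 = m := by omega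
    have h2 : (k+1) / 2 = m := by omega
    rw [h1, h2, one_mul, ← mul_assoc, conj_si' cs i j m,
      show 2 * m = k from by omega]
  · obtain ⟨m, hm⟩ := ho
    rw [cs.prod_alternatingWord_eq_mul_pow, cs.prod_alternatingWord_eq_mul_pow,
      if_neg (by rw [hm]; simp [Nat.even_add_one, parity_simps]),
      if_pos (by rw [hm]; exact ⟨m+1, by ring⟩)]
    have h1 : k / 2 = m := by omega
    have h2 : (k+1) / 2 = m + 1 := by omega
    rw [h1, h2, one_mul, mul_inv_rev, cs.inv_simple, pow_succ, ← mul_assoc, ← mul_assoc,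
      conj_si' cs i j m,
      mul_assoc ((cs.simple i * cs.simple j)⁻¹ ^ (2 * m)) (cs.simple j),
      show cs.simple j * cs.simple i = (cs.simple i * cs.simple j)⁻¹ from by
        rw [mul_inv_rev, cs.inv_simple, cs.inv_simple],
      ← pow_succ, show 2 * m + 1 = k from by omega]

theorem ris_alt (i j : B) : ∀ k, ∀ r < k,
    (cs.rightInvSeq (alternatingWord i j k)).getD r 1
      = ((cs.simple i * cs.simple j)⁻¹) ^ (k - 1 - r) * cs.simple j := by
  intro k
  induction k with
  | zero => intro r hr; omega
  | succ k ih =>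
    intro r hr
    rw [alternatingWord_succ' i j k]
    have hris : cs.rightInvSeq ((if Even k then j else i) :: alternatingWord i j k)
        = ((cs.wordProd (alternatingWord i j k))⁻¹ * cs.simple (if Even k then j else i)
            * cs.wordProd (alternatingWord i j k)) :: cs.rightInvSeq (alternatingWord i j k)
        := rfl
    rw [hris]
    cases r with
    | zero =>
      rw [List.getD_cons_zero]
      have hcons : cs.simple (if Even k then j else i) * cs.wordProd (alternatingWord i j k)
          = cs.wordProd (alternatingWord i j (k+1)) := by
        rw [alternatingWord_succ' i j k, wordProd_cons]
      rw [mul_assoc, hcons, alt_quot cs i j k,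
        show k + 1 - 1 - 0 = k from by omega]
    | succ r =>
      rw [List.getD_cons_succ, show k + 1 - 1 - (r + 1) = k - 1 - r from by omega]
      exact ih r (by omega)

theorem alt_reduced : ∀ (k : ℕ) (i j : B), i ≠ j → (M i j = 0 ∨ k ≤ M i j) →
    cs.IsReduced (alternatingWord i j k) := by
  intro k
  induction k with
  | zero =>
    intro i j _ _
    unfold CoxeterSystem.IsReduced
    simp [alternatingWord]
  | succ k ih =>
    intro i j hij hk
    have hsym : M j i = 0 ∨ k ≤ M j i := by
      rw [M.symmetric j i]
      rcases hk with h | h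
      · exact Or.inl h
      · exact Or.inr (by omega)
    have hred : cs.IsReduced (alternatingWord j i k) := ih j i hij.symm hsym
    by_contra hnot
    have hπ : cs.wordProd (alternatingWord i j (k+1))
        = cs.wordProd (alternatingWord j i k) * cs.simple j := by
      rw [alternatingWord_succ, wordProd_concat]
    have hlen : cs.length (cs.wordProd (alternatingWord j i k)) = k := by
      have := hred
      unfold CoxeterSystem.IsReduced at this
      rwa [length_alternatingWord] at this
    have hdesc : cs.IsRightDescent (cs.wordProd (alternatingWord j i k)) j := by
      rcases cs.length_mul_simple (cs.wordProd (alternatingWord j i k)) j with h1 | h1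
      · exfalso
        apply hnot
        unfold CoxeterSystem.IsReduced
        rw [hπ, h1, hlen, length_alternatingWord]
      · unfold CoxeterSystem.IsRightDescent
        omega
    have hmem := mem_rightInvSeq_of_isRightDescent cs hdesc
    obtain ⟨r, hr, hrEq⟩ := List.mem_iff_getElem.mp hmem
    have hrlen : r < k := by
      rwa [length_rightInvSeq, length_alternatingWord] at hr
    have hform := ris_alt cs j i k r hrlen
    rw [List.getD_eq_getElem _ _ hr, hrEq] at hform
    -- hform : cs.simple j = ((s j * s i)⁻¹)^(k-1-r) * cs.simple i
    have hb : ((cs.simple j * cs.simple i)⁻¹) ^ (k - 1 - r) = cs.simple j * cs.simple i := by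
      have h2 := congrArg (fun z => z * cs.simple i) hform
      rw [mul_assoc, cs.simple_mul_simple_self, mul_one] at h2
      exact h2.symm
    have h1 : ((cs.simple j * cs.simple i)⁻¹) ^ (k - 1 - r + 1) = 1 := by
      rw [pow_succ, hb, mul_inv_cancel]
    have h2 : (cs.simple j * cs.simple i) ^ (k - 1 - r + 1) = 1 := by
      rw [inv_pow] at h1
      exact inv_eq_one.mp h1
    apply pair_pow_ne_one cs hij.symm (show 0 < k - 1 - r + 1 by omega) ?_ h2
    rcases hk with h0 | hle
    · exact Or.inl (by rw [M.symmetric j i]; exact h0)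
    · exact Or.inr (by rw [M.symmetric j i]; omega)

theorem alternatingWord_one (x y : B) : alternatingWord x y 1 = [y] := rfl

theorem two_letter_alt : ∀ (ζ : List B) (i j : B), (∀ x ∈ ζ, x = i ∨ x = j) →
    cs.IsReduced ζ → ζ ≠ [] →
    ∃ c d : B, ((c = i ∧ d = j) ∨ (c = j ∧ d = i)) ∧ ζ = alternatingWord d c ζ.length := by
  intro ζ
  induction ζ using List.reverseRecOn with
  | nil => intro i j _ _ h; exact absurd rfl h
  | append_singleton ζ' c ihζ =>
    intro i j hJ hred _
    have hc : c = i ∨ c = j := hJ c (by simp)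
    by_cases hζ' : ζ' = []
    · subst hζ'
      rcases hc with rfl | rfl
      · exact ⟨c, j, Or.inl ⟨rfl, rfl⟩, by simp [alternatingWord_one]⟩
      · exact ⟨c, i, Or.inr ⟨rfl, rfl⟩, by simp [alternatingWord_one]⟩
    · have hζ'J : ∀ x ∈ ζ', x = i ∨ x = j := fun x hx => hJ x (by simp [hx])
      have hζ'red : cs.IsReduced ζ' := by
        have := CoxeterSystem.IsReduced.take hred ζ'.length
        rwa [List.take_left] at this
      obtain ⟨c', d', hpair, hζ'alt⟩ := ihζ i j hζ'J hζ'red hζ'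
      obtain ⟨m, hm⟩ : ∃ m, ζ'.length = m + 1 :=
        ⟨ζ'.length - 1, by have := List.length_pos_iff.mpr hζ'; omega⟩
      have hζ'concat : ζ' = (alternatingWord c' d' m).concat c' := by
        rw [hζ'alt, hm, alternatingWord_succ]
      have hcc' : c ≠ c' := by
        intro hEq
        apply not_isReduced_double cs (alternatingWord c' d' m) c []
        have hsplit : ζ' ++ [c] = alternatingWord c' d' m ++ c :: c :: [] := by
          rw [hζ'concat, hEq, List.concat_eq_append]
          simp
        rw [← hsplit]
        exact hred
      have hcd' : c = d' := by
        rcases hpair with ⟨h1, h2⟩ | ⟨h1, h2⟩ <;> rcases hc with rfl | rfl <;>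
          first
          | rfl
          | (exact absurd h1.symm hcc')
          | (rw [h2])
          | (exact absurd (h1 ▸ rfl) hcc')
      refine ⟨d', c', ?_, ?_⟩
      · rcases hpair with ⟨h1, h2⟩ | ⟨h1, h2⟩
        · exact Or.inr ⟨h2, h1⟩
        · exact Or.inl ⟨h2, h1⟩
      · rw [show (ζ' ++ [c]).length = (m + 1) + 1 by simp [hm]]
        rw [alternatingWord_succ, ← hm, ← hζ'alt, hcd', List.concat_eq_append]

end AltSec
end CoxShortProof


namespace CoxShortProof
open CoxeterSystem List

section FinSec

variable {B W : Type*} [Group W] {M : CoxeterMatrix B} (cs : CoxeterSystem M W)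
variable [DecidableEq W]

theorem two_descents {v : W} {i j : B} (hij : i ≠ j)
    (hi : cs.IsRightDescent v i) (hj : cs.IsRightDescent v j) :
    M i j ≠ 0 ∧ M i j ≤ cs.length v := by
  classical
  have hSne : ∃ n, ∃ z ∈ Subgroup.closure {cs.simple i, cs.simple j},
      cs.length (v * z) = n := ⟨cs.length v, 1, one_mem _, by rw [mul_one]⟩
  obtain ⟨z₀, hz₀J, hz₀len⟩ := Nat.find_spec hSne
  have hmin : ∀ z' ∈ Subgroup.closure {cs.simple i, cs.simple j},
      Nat.find hSne ≤ cs.length (v * z') := fun z' hz' => Nat.find_le ⟨z', hz', rfl⟩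
  have humin : ∀ z' ∈ Subgroup.closure {cs.simple i, cs.simple j},
      cs.length (v * z₀) ≤ cs.length (v * z₀ * z') := by
    intro z' hz'
    rw [hz₀len, mul_assoc]
    exact hmin _ (mul_mem hz₀J hz')
  have hvu : v = (v * z₀) * z₀⁻¹ := by group
  have hz₀inv : z₀⁻¹ ∈ Subgroup.closure {cs.simple i, cs.simple j} := inv_mem hz₀J
  have haux : ∀ z' ∈ Subgroup.closure {cs.simple i, cs.simple j},
      ∃ ξ : List B, cs.wordProd ξ = z' ∧ cs.IsReduced ξ ∧ (∀ x ∈ ξ, x = i ∨ x = j) ∧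
        cs.length (v * z₀ * z') = cs.length (v * z₀) + ξ.length := by
    intro z' hz'
    obtain ⟨ξ₁, h1, h2⟩ := exists_word_pair cs hz'
    obtain ⟨ξ, hp, hr, hs⟩ := exists_reduced_alphabet cs ξ₁.length ξ₁ le_rfl
    have hJ : ∀ x ∈ ξ, x = i ∨ x = j := fun x hx => h2 x (hs x hx)
    rw [h1] at hp
    refine ⟨ξ, hp, hr, hJ, ?_⟩
    rw [← hp]
    exact length_min_mul_reduced cs humin hJ hr
  obtain ⟨ζ, hζprod, hζred, hζJ, hζlen⟩ := haux z₀⁻¹ hz₀inv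
  rw [← hvu] at hζlen
  -- descents of z₀⁻¹
  have hdesc : ∀ d : B, (d = i ∨ d = j) → cs.IsRightDescent v d →
      cs.IsRightDescent z₀⁻¹ d := by
    intro d hd hvd
    have hdJ : z₀⁻¹ * cs.simple d ∈ Subgroup.closure {cs.simple i, cs.simple j} := by
      apply mul_mem hz₀inv
      rcases hd with rfl | rfl
      · exact Subgroup.subset_closure (by simp)
      · exact Subgroup.subset_closure (by simp)
    obtain ⟨ξ, hp, hr, _, hlen⟩ := haux _ hdJ
    rw [← mul_assoc, ← hvu] at hlen
    have hξl : cs.length (z₀⁻¹ * cs.simple d) = ξ.length := by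
      rw [← hp]; exact hr
    have hζl : cs.length z₀⁻¹ = ζ.length := by
      rw [← hζprod]; exact hζred
    unfold CoxeterSystem.IsRightDescent at hvd ⊢
    omega
  have hdi : cs.IsRightDescent z₀⁻¹ i := hdesc i (Or.inl rfl) hi
  have hdj : cs.IsRightDescent z₀⁻¹ j := hdesc j (Or.inr rfl) hj
  have hζne : ζ ≠ [] := by
    intro hnil
    rw [hnil, wordProd_nil] at hζprod
    rw [← hζprod] at hdi
    exact cs.not_isRightDescent_one i hdi
  obtain ⟨c, d, hpair, hζalt⟩ := two_letter_alt cs ζ i j hζJ hζred hζne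
  have hcd : c ≠ d := by
    rcases hpair with ⟨rfl, rfl⟩ | ⟨rfl, rfl⟩
    · exact hij
    · exact hij.symm
  have hddesc : cs.IsRightDescent z₀⁻¹ d := by
    rcases hpair with ⟨_, rfl⟩ | ⟨_, rfl⟩
    · exact hdj
    · exact hdi
  have hζl : cs.length z₀⁻¹ = ζ.length := by
    rw [← hζprod]
    exact hζred
  have hnotred : ¬ cs.IsReduced (alternatingWord c d (ζ.length + 1)) := by
    intro hredalt
    have hconcat : alternatingWord c d (ζ.length + 1) = ζ.concat d := by
      rw [alternatingWord_succ, ← hζalt]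
    have h1 : cs.length (z₀⁻¹ * cs.simple d) = ζ.length + 1 := by
      have := hredalt
      unfold CoxeterSystem.IsReduced at this
      rw [hconcat, wordProd_concat, hζprod, List.length_concat] at this
      exact this
    unfold CoxeterSystem.IsRightDescent at hddesc
    omega
  have hMcd : M c d ≠ 0 ∧ M c d < ζ.length + 1 := by
    by_contra hcon
    push_neg at hcon
    apply hnotred
    apply alt_reduced cs (ζ.length + 1) c d hcd
    by_cases h0 : M c d = 0
    · exact Or.inl h0
    · exact Or.inr (hcon h0)
  have hMij : M c d = M i j := by
    rcases hpair with ⟨rfl, rfl⟩ | ⟨rfl, rfl⟩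
    · rfl
    · exact M.symmetric _ _
  constructor
  · rw [← hMij]; exact hMcd.1
  · rw [← hMij]
    omega

theorem aux_reduced : ∀ (n : ℕ) (ω : List B), ω.length ≤ n →
    (∀ s t : B, s ≠ t → M s t = 0 ∨ ω.length < M s t) →
    (∀ (l₁ : List B) (c : B) (l₂ : List B), ω ≠ l₁ ++ c :: c :: l₂) →
    cs.IsReduced ω := by
  intro n
  induction n with
  | zero =>
    intro ω hl _ _
    have : ω = [] := List.eq_nil_of_length_eq_zero (by omega)
    rw [this]
    exact isReduced_nil cs
  | succ n ih =>
    intro ω hlen hg hnd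
    rcases List.eq_nil_or_concat' ω with rfl | ⟨σ, x, rfl⟩
    · exact isReduced_nil cs
    have hσlen : (σ ++ [x]).length = σ.length + 1 := by simp
    have hσred : cs.IsReduced σ := by
      apply ih σ (by omega)
      · intro s t hst
        rcases hg s t hst with h | h
        · exact Or.inl h
        · exact Or.inr (by omega)
      · intro l₁ c l₂ hEq
        exact hnd l₁ c (l₂ ++ [x]) (by rw [hEq]; simp)
    by_contra hnotred
    have hπ : cs.wordProd (σ ++ [x]) = cs.wordProd σ * cs.simple x := by
      rw [wordProd_append, wordProd_singleton]
    have hdx : cs.IsRightDescent (cs.wordProd σ) x := by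
      rcases cs.length_mul_simple (cs.wordProd σ) x with h1 | h1
      · exfalso
        apply hnotred
        unfold CoxeterSystem.IsReduced
        rw [hπ, h1, hσred, hσlen]
      · unfold CoxeterSystem.IsRightDescent
        omega
    rcases List.eq_nil_or_concat' σ with rfl | ⟨σ', y, rfl⟩
    · rw [wordProd_nil] at hdx
      exact cs.not_isRightDescent_one x hdx
    have hyx : y ≠ x := by
      intro h
      subst h
      exact hnd σ' y [] (by simp)
    have hdy : cs.IsRightDescent (cs.wordProd (σ' ++ [y])) y := by
      have h1 : cs.wordProd (σ' ++ [y]) * cs.simple y = cs.wordProd σ' := by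
        rw [wordProd_append, wordProd_singleton, mul_assoc, cs.simple_mul_simple_self,
          mul_one]
      have h2 := cs.length_wordProd_le σ'
      have h3 : cs.length (cs.wordProd (σ' ++ [y])) = σ'.length + 1 := by
        have := hσred
        unfold CoxeterSystem.IsReduced at this
        rw [this]
        simp
      unfold CoxeterSystem.IsRightDescent
      rw [h1]
      omega
    obtain ⟨hM0, hMle⟩ := two_descents cs (Ne.symm hyx) hdx hdy
    have hσl : cs.length (cs.wordProd (σ' ++ [y])) = σ'.length + 1 := by
      have := hσred
      unfold CoxeterSystem.IsReduced at this
      rw [this]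
      simp
    rcases hg x y (Ne.symm hyx) with h0 | h0
    · exact hM0 h0
    · have hω : (σ' ++ [y] ++ [x]).length = σ'.length + 2 := by simp
      omega

end FinSec
end CoxShortProof


/-- Let `(W, S)` be a Coxeter system and `w` a word over `S` with
`l(w) < γ(W)/2`, where `γ(W) = 2 · min_{s ≠ t} m_{s,t}` is the girth (Mathlib's
convention: the matrix entry `0` stands for `∞`). If `w` is not reduced, then `w`
contains a substring of the form `s s` for some letter `s`. -/
theorem not_reduced_short_word_has_double_letter {B W : Type*} [Group W]
    {M : CoxeterMatrix B} (cs : CoxeterSystem M W) (w : List B)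
    (hgirth : ∀ s t : B, s ≠ t → M s t = 0 ∨ 2 * w.length < 2 * M s t)
    (hnotred : ¬ cs.IsReduced w) :
    ∃ (l₁ : List B) (s : B) (l₂ : List B), w = l₁ ++ s :: s :: l₂ := by
  classical
  by_contra hnd
  push_neg at hnd
  apply hnotred
  apply CoxShortProof.aux_reduced cs w.length w le_rfl
  · intro s t hst
    rcases hgirth s t hst with h | h
    · exact Or.inl h
    · exact Or.inr (by omega)
  · exact hnd
end

section
/- Let (W,S) be a Coxeter system, I ⊆ S, and t ∈ S \ I. Then the centraliser of t in the parabolic subgroup W_I equals W_{I(t)}, where I(t) = {s ∈ I : m_{s,t} = 2}. Consequently the conjugacy orbit t^{W_I} = {w t w^{-1} : w ∈ W_I} is in bijection with W_I / W_{I(t)}. -/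
noncomputable section
open CoxeterSystem Real

namespace CoxAux

/-! ### Chebyshev-like sequences -/

def cheb (c : ℝ) : ℕ → ℝ
  | 0 => 0
  | 1 => 1
  | (k+2) => 2*c*cheb c (k+1) - cheb c k

@[simp] lemma cheb_zero (c : ℝ) : cheb c 0 = 0 := rfl
@[simp] lemma cheb_one (c : ℝ) : cheb c 1 = 1 := rfl
lemma cheb_add_two (c : ℝ) (k : ℕ) : cheb c (k+2) = 2*c*cheb c (k+1) - cheb c k := rfl

lemma cheb_identity (c : ℝ) (k : ℕ) :
    cheb c (k+1)^2 - 2*c*cheb c (k+1)*cheb c k + cheb c k^2 = 1 := by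
  induction k with
  | zero => simp
  | succ k ih => rw [cheb_add_two]; linear_combination ih

lemma cheb_sin (θ : ℝ) (k : ℕ) : cheb (Real.cos θ) k * Real.sin θ = Real.sin (k * θ) := by
  induction k using Nat.strong_induction_on with
  | _ k ih =>
    match k with
    | 0 => simp
    | 1 => simp
    | (k+2) =>
      rw [cheb_add_two]
      have h1 := ih (k+1) (by omega)
      have h2 := ih k (by omega)
      have e1 : ((k:ℝ)+2) * θ = ((k:ℝ)+1) * θ + θ := by ring
      have e2 : (k:ℝ) * θ = ((k:ℝ)+1) * θ - θ := by ring
      push_cast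
      rw [e1, Real.sin_add]
      push_cast at h1 h2
      rw [e2, Real.sin_sub] at h2
      linear_combination h1 * (2 * Real.cos θ) - h2

lemma cheb_one' (k : ℕ) : cheb 1 k = k := by
  induction k using Nat.strong_induction_on with
  | _ k ih =>
    match k with
    | 0 => simp
    | 1 => simp
    | (k+2) =>
      rw [cheb_add_two, ih (k+1) (by omega), ih k (by omega)]
      push_cast; ring

/-! ### The geometric representation -/

variable {B : Type*} (M : CoxeterMatrix B)

def kappa (a b : B) : ℝ := - Real.cos (Real.pi / M a b)

lemma kappa_self (a : B) : kappa M a a = 1 := by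
  rw [kappa, M.diagonal]; simp

lemma kappa_symm (a b : B) : kappa M a b = kappa M b a := by
  rw [kappa, kappa, M.symmetric]

def fr (a : B) : (B →₀ ℝ) →ₗ[ℝ] ℝ := Finsupp.linearCombination ℝ (fun b => 2 * kappa M a b)

lemma fr_single (a b : B) : fr M a (Finsupp.single b 1) = 2 * kappa M a b := by
  simp [fr]

def sigma (a : B) : Module.End ℝ (B →₀ ℝ) :=
  LinearMap.id - (fr M a).smulRight (Finsupp.single a 1)

lemma sigma_apply (a : B) (x : B →₀ ℝ) :
    sigma M a x = x - fr M a x • Finsupp.single a 1 := rfl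

lemma sigma_invol (a : B) (x : B →₀ ℝ) : sigma M a (sigma M a x) = x := by
  rw [sigma_apply, sigma_apply, map_sub, map_smul, fr_single, kappa_self, smul_eq_mul]
  module

def usigma (a : B) : (Module.End ℝ (B →₀ ℝ))ˣ where
  val := sigma M a
  inv := sigma M a
  val_inv := LinearMap.ext (sigma_invol M a)
  inv_val := LinearMap.ext (sigma_invol M a)


lemma sigma_mul_apply (a b : B) (y : B →₀ ℝ) :
    (sigma M a * sigma M b) y =
      y - (fr M b y) • Finsupp.single b 1
        - (fr M a y - (fr M b y) * (2 * kappa M a b)) • Finsupp.single a 1 := by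
  show sigma M a (sigma M b y) = _
  rw [sigma_apply, sigma_apply, map_sub, map_smul, fr_single, smul_eq_mul]

/-- The key orbit formula for the product of two simple reflections in the geometric
representation. -/
lemma orbit (a b : B) (x : B →₀ ℝ) (k : ℕ) :
    ((sigma M a * sigma M b)^k) x =
      x - (cheb (-kappa M a b) k * (cheb (-kappa M a b) k * fr M a x
            + cheb (-kappa M a b) (k+1) * fr M b x)) • Finsupp.single a 1
        - (cheb (-kappa M a b) k * ((2*(-kappa M a b)*cheb (-kappa M a b) k
            - cheb (-kappa M a b) (k+1)) * fr M a x
            + cheb (-kappa M a b) k * fr M b x)) • Finsupp.single b 1 := by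
  obtain ⟨c, hk⟩ : ∃ c, kappa M a b = -c := ⟨-kappa M a b, by ring⟩
  have hmk : -kappa M a b = c := by rw [hk]; ring
  rw [hmk]
  set F := fr M a x with hF
  set G := fr M b x with hG
  induction k with
  | zero => simp
  | succ k ih =>
    rw [pow_succ', Module.End.mul_apply, ih, sigma_mul_apply]
    have hba : kappa M b a = kappa M a b := kappa_symm M b a
    have hfb : fr M b (x - (cheb c k * (cheb c k * F + cheb c (k+1) * G)) • Finsupp.single a 1
        - (cheb c k * ((2*c*cheb c k - cheb c (k+1)) * F + cheb c k * G)) • Finsupp.single b 1)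
        = G + (cheb c k * (cheb c k * F + cheb c (k+1) * G)) * (2*c)
            - (cheb c k * ((2*c*cheb c k - cheb c (k+1)) * F + cheb c k * G)) * 2 := by
      rw [map_sub, map_sub, map_smul, map_smul, fr_single, fr_single, kappa_self, hba, hk,
        smul_eq_mul, smul_eq_mul]
      ring
    have hfa : fr M a (x - (cheb c k * (cheb c k * F + cheb c (k+1) * G)) • Finsupp.single a 1
        - (cheb c k * ((2*c*cheb c k - cheb c (k+1)) * F + cheb c k * G)) • Finsupp.single b 1)
        = F - (cheb c k * (cheb c k * F + cheb c (k+1) * G)) * 2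
            + (cheb c k * ((2*c*cheb c k - cheb c (k+1)) * F + cheb c k * G)) * (2*c) := by
      rw [map_sub, map_sub, map_smul, map_smul, fr_single, fr_single, kappa_self, hk,
        smul_eq_mul, smul_eq_mul]
      ring
    rw [hfa, hfb, hk]
    have E := cheb_identity c k
    have R : cheb c (k+2) = 2*c*cheb c (k+1) - cheb c k := cheb_add_two c k
    match_scalars
    · ring
    · rw [R]; linear_combination (F + 2*c*G) * E
    · rw [R]; linear_combination G * E


lemma sigma_pow_M_eq_one (a b : B) (h2 : 2 ≤ M a b) :
    (sigma M a * sigma M b) ^ (M a b) = 1 := by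
  have hmpos : (0:ℝ) < (M a b : ℝ) := by positivity
  have hθpos : 0 < Real.pi / M a b := by positivity
  have hθlt : Real.pi / M a b < Real.pi := by
    apply div_lt_self Real.pi_pos
    exact_mod_cast h2.trans_lt' one_lt_two
  have hsin : Real.sin (Real.pi / M a b) ≠ 0 :=
    ne_of_gt (Real.sin_pos_of_pos_of_lt_pi hθpos hθlt)
  have hc : -kappa M a b = Real.cos (Real.pi / M a b) := by rw [kappa]; ring
  have hcheb : cheb (-kappa M a b) (M a b) = 0 := by
    rw [hc]
    have h := cheb_sin (Real.pi / M a b) (M a b)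
    rw [mul_div_cancel₀ _ (ne_of_gt hmpos), Real.sin_pi] at h
    exact (mul_eq_zero.mp h).resolve_right hsin
  apply LinearMap.ext
  intro x
  rw [orbit, hcheb]
  simp

lemma isLiftable : M.IsLiftable (fun a => usigma M a) := by
  intro a b
  rcases eq_or_ne a b with rfl | hab
  · rw [M.diagonal, pow_one]
    apply Units.ext
    exact LinearMap.ext (sigma_invol M a)
  · rcases Nat.eq_zero_or_pos (M a b) with h0 | hpos
    · rw [h0, pow_zero]
    · have h2 : 2 ≤ M a b := by
        have := M.off_diagonal a b hab
        omega
      apply Units.ext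
      rw [Units.val_pow_eq_pow_val, Units.val_mul]
      exact sigma_pow_M_eq_one M a b h2

variable {W : Type*} [Group W] (cs : CoxeterSystem M W)

def grho : W →* (Module.End ℝ (B →₀ ℝ))ˣ := cs.lift ⟨fun a => usigma M a, isLiftable M⟩

lemma grho_simple (a : B) : grho M cs (cs.simple a) = usigma M a :=
  cs.lift_apply_simple (isLiftable M) a

/-- Order-exactness: if `(s a * s b) ^ k = 1` with `a ≠ b` then `M a b ∣ k`. -/
theorem M_dvd_of_pow_eq_one {a b : B} (hab : a ≠ b) {k : ℕ}
    (h : (cs.simple a * cs.simple b) ^ k = 1) : M a b ∣ k := by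
  -- transfer to the geometric representation
  have hEnd : (sigma M a * sigma M b) ^ k = 1 := by
    have h1 := congrArg (grho M cs) h
    rw [map_pow, map_mul, grho_simple, grho_simple, map_one] at h1
    have h2 := congrArg Units.val h1
    rwa [Units.val_pow_eq_pow_val, Units.val_mul] at h2
  have horb := orbit M a b (Finsupp.single a 1) k
  rw [hEnd] at horb
  have hF : fr M a (Finsupp.single a 1) = 2 := by rw [fr_single, kappa_self]; norm_num
  have hG : fr M b (Finsupp.single a 1) = 2 * kappa M a b := by
    rw [fr_single, kappa_symm]
  rw [hF, hG] at horb
  -- extract the two scalar equations by evaluating at the coordinates a and b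
  have hQ : cheb (-kappa M a b) k * ((2*(-kappa M a b)*cheb (-kappa M a b) k
      - cheb (-kappa M a b) (k+1)) * 2 + cheb (-kappa M a b) k * (2 * kappa M a b)) = 0 := by
    have h3 := congrArg (fun v : B →₀ ℝ => v b) horb
    simpa [Finsupp.single_apply, hab, Ne.symm hab] using h3.symm
  have hP : cheb (-kappa M a b) k * (cheb (-kappa M a b) k * 2
      + cheb (-kappa M a b) (k+1) * (2 * kappa M a b)) = 0 := by
    have h3 := congrArg (fun v : B →₀ ℝ => v a) horb
    simpa [Finsupp.single_apply, hab, Ne.symm hab] using h3.symm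
  rcases Nat.eq_zero_or_pos (M a b) with h0 | hpos
  · -- infinite bond: c = 1, cheb is linear, contradiction unless k = 0
    rw [h0]
    have hc1 : -kappa M a b = 1 := by
      rw [kappa, h0]; norm_num
    have hk1 : kappa M a b = -1 := by linarith
    rw [hc1, hk1, cheb_one', cheb_one'] at hQ
    push_cast at hQ
    have hk0 : (k:ℝ) = 0 := by linear_combination (-1/2 : ℝ) * hQ
    have : k = 0 := by exact_mod_cast hk0
    simp [this]
  · have h2 : 2 ≤ M a b := by
      have := M.off_diagonal a b hab
      omega
    have hmpos : (0:ℝ) < (M a b : ℝ) := by positivity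
    set θ := Real.pi / M a b with hθ
    have hθpos : 0 < θ := by positivity
    have hθlt : θ < Real.pi := by
      apply div_lt_self Real.pi_pos
      exact_mod_cast h2.trans_lt' one_lt_two
    have hsinpos : 0 < Real.sin θ := Real.sin_pos_of_pos_of_lt_pi hθpos hθlt
    have hsin : Real.sin θ ≠ 0 := ne_of_gt hsinpos
    have hc : -kappa M a b = Real.cos θ := by rw [kappa]; ring
    have hkc : kappa M a b = -Real.cos θ := by linarith
    rw [hc, hkc] at hP hQ
    have e1 : cheb (Real.cos θ) k * Real.sin θ = Real.sin (k * θ) := cheb_sin θ k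
    have e2 : cheb (Real.cos θ) (k+1) * Real.sin θ = Real.sin ((k+1 : ℕ) * θ) := cheb_sin θ (k+1)
    have e2' : cheb (Real.cos θ) (k+1) * Real.sin θ = Real.sin (((k:ℝ)+1) * θ) := by
      push_cast at e2; exact e2
    have hx : Real.sin (((k:ℝ)+1) * θ)
        = Real.sin (k*θ) * Real.cos θ + Real.cos (k*θ) * Real.sin θ := by
      rw [show ((k:ℝ)+1) * θ = k*θ + θ by ring, Real.sin_add]
    have hy : Real.cos (((k:ℝ)+1) * θ)
        = Real.cos (k*θ) * Real.cos θ - Real.sin (k*θ) * Real.sin θ := by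
      rw [show ((k:ℝ)+1) * θ = k*θ + θ by ring, Real.cos_add]
    have hpyth := Real.sin_sq_add_cos_sq θ
    -- P-equation in trigonometric form
    have hP4 : Real.sin (k*θ) * (Real.sin (k*θ) - Real.cos θ * Real.sin (((k:ℝ)+1)*θ)) = 0 := by
      rw [← e1, ← e2']
      linear_combination (Real.sin θ^2 / 2) * hP
    rw [hx] at hP4
    have hPs : Real.sin (k*θ) * Real.cos (((k:ℝ)+1) * θ) = 0 := by
      have key : Real.sin (k*θ) * (Real.sin θ * Real.cos (((k:ℝ)+1)*θ)) = 0 := by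
        rw [hy]
        linear_combination (-1 : ℝ) * hP4 - Real.sin ((k:ℝ)*θ)^2 * hpyth
      rcases mul_eq_zero.mp key with h5 | h5
      · rw [h5]; ring
      · rcases mul_eq_zero.mp h5 with h6 | h6
        · exact absurd h6 hsin
        · rw [h6]; ring
    -- Q-equation in trigonometric form
    have hQ4 : Real.sin (k*θ) * (Real.cos θ * Real.sin (k*θ) - Real.sin (((k:ℝ)+1)*θ)) = 0 := by
      rw [← e1, ← e2']
      linear_combination (Real.sin θ^2 / 2) * hQ
    rw [hx] at hQ4
    have hQs : Real.sin (k*θ) * Real.cos ((k:ℝ)*θ) = 0 := by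
      have key : Real.sin (k*θ) * (Real.cos ((k:ℝ)*θ) * Real.sin θ) = 0 := by
        linear_combination (-1 : ℝ) * hQ4
      rcases mul_eq_zero.mp key with h5 | h5
      · rw [h5]; ring
      · rcases mul_eq_zero.mp h5 with h6 | h6
        · rw [h6]; ring
        · exact absurd h6 hsin
    -- Now conclude
    rcases mul_eq_zero.mp hQs with hs0 | hc0
    · -- sin(kθ) = 0 ⇒ m ∣ k
      rw [Real.sin_eq_zero_iff] at hs0
      obtain ⟨n, hn⟩ := hs0
      have hn' : ((n * M a b : ℤ) : ℝ) * Real.pi = ((k : ℤ) : ℝ) * Real.pi := by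
        push_cast
        rw [hθ] at hn
        field_simp at hn
        linear_combination Real.pi * hn
      have hnm : (n * M a b : ℤ) = (k : ℤ) := by
        have h5 : ((n * (M a b : ℤ) : ℤ) : ℝ) = ((k : ℤ) : ℝ) :=
          mul_right_cancel₀ Real.pi_ne_zero hn'
        exact_mod_cast h5
      have hn0 : (0:ℤ) ≤ n := by nlinarith [hnm, Int.ofNat_nonneg k]
      refine ⟨n.toNat, ?_⟩
      have h6 : ((M a b * n.toNat : ℕ) : ℤ) = (k:ℤ) := by
        push_cast [Int.toNat_of_nonneg hn0]
        linarith [hnm]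
      exact_mod_cast h6.symm
    · -- cos(kθ) = 0 and cos((k+1)θ) = 0 is impossible
      exfalso
      have hc1 : Real.cos (((k:ℝ)+1) * θ) = 0 := by
        rcases mul_eq_zero.mp hPs with h5 | h5
        · -- sin(kθ) = 0 and cos(kθ) = 0 impossible
          exfalso
          have := Real.sin_sq_add_cos_sq ((k:ℝ)*θ)
          rw [h5, hc0] at this
          norm_num at this
        · exact h5
      rw [Real.cos_eq_zero_iff] at hc0 hc1
      obtain ⟨n1, hn1⟩ := hc0
      obtain ⟨n2, hn2⟩ := hc1
      have hsub : θ = ((n2 - n1 : ℤ) : ℝ) * Real.pi := by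
        push_cast
        push_cast at hn1 hn2
        linarith [hn1, hn2]
      have h1 : (0:ℝ) < ((n2 - n1 : ℤ) : ℝ) := by
        rcases le_or_gt ((n2 - n1 : ℤ) : ℝ) 0 with hle | hlt
        · have := mul_nonpos_of_nonpos_of_nonneg hle Real.pi_pos.le
          linarith [hθpos, hsub.ge, hsub.le]
        · exact hlt
      have h2' : ((n2 - n1 : ℤ) : ℝ) < 1 := by
        have hπ : ((n2 - n1 : ℤ) : ℝ) * Real.pi < 1 * Real.pi := by
          rw [one_mul]; linarith [hθlt, hsub.le, hsub.ge]
        exact lt_of_mul_lt_mul_right (by linarith [hπ]) Real.pi_pos.le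
      have : (0:ℤ) < n2 - n1 := by exact_mod_cast h1
      have : (n2 - n1 : ℤ) < 1 := by exact_mod_cast h2'
      omega


theorem simple_injective : Function.Injective cs.simple := by
  intro a b hab
  by_contra hne
  have h1 : (cs.simple a * cs.simple b) ^ 1 = 1 := by
    rw [pow_one, hab, simple_mul_simple_self]
  have h2 := M_dvd_of_pow_eq_one M cs hne h1
  have h3 := M.off_diagonal a b hne
  rw [Nat.dvd_one] at h2
  exact h3 h2

theorem M_commute_of_sq (a b : B) (hne : a ≠ b)
    (h : (cs.simple a * cs.simple b) ^ 2 = 1) : M a b = 2 := by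
  have h2 := M_dvd_of_pow_eq_one M cs hne h
  have h3 := M.off_diagonal a b hne
  rcases (Nat.dvd_prime Nat.prime_two).mp h2 with h4 | h4
  · exact absurd h4 h3
  · exact h4

/-- If `s t * s i * s t` is a simple reflection and `i ≠ t`, then `M i t = 2`. -/
theorem M_eq_two_of_conj_simple {i t j : B} (hit : i ≠ t)
    (h : cs.simple t * cs.simple i * cs.simple t = cs.simple j) : M i t = 2 := by
  rcases eq_or_ne j t with rfl | hjt
  · -- then s i = s j, contradiction with i ≠ j
    exfalso
    apply hit
    apply simple_injective M cs
    have h6 := congrArg (fun w => cs.simple j * w * cs.simple j) h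
    simp only [mul_assoc, simple_mul_simple_cancel_left, simple_mul_simple_self, mul_one, one_mul] at h6
    exact h6
  rcases eq_or_ne j i with rfl | hji
  · -- (s j * s t)^2 = 1
    apply M_commute_of_sq M cs j t hit
    calc (cs.simple j * cs.simple t) ^ 2
        = cs.simple j * (cs.simple t * cs.simple j * cs.simple t) := by
          rw [pow_two]; group
      _ = 1 := by rw [h, simple_mul_simple_self]
  · -- j ∉ {i, t}: contradiction via the geometric representation
    exfalso
    have hEnd : sigma M t * sigma M i * sigma M t = sigma M j := by
      have h1 := congrArg (grho M cs) h
      simp only [map_mul, grho_simple] at h1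
      have h2 := congrArg Units.val h1
      rwa [Units.val_mul, Units.val_mul] at h2
    have h3 := congrArg (fun u : Module.End ℝ (B →₀ ℝ) => u (Finsupp.single j 1) j) hEnd
    simp only [Module.End.mul_apply, sigma_apply, map_sub, map_smul, fr_single, kappa_self,
      smul_eq_mul, Finsupp.sub_apply, Finsupp.smul_apply,
      Finsupp.single_eq_of_ne hji, Finsupp.single_eq_of_ne hjt,
      Finsupp.single_eq_same] at h3
    norm_num at h3


/-! ### The sign permutation representation and strong exchange -/

section PermRep

open scoped Classical

variable {B : Type*} {W : Type*} [Group W] {M : CoxeterMatrix B} (cs : CoxeterSystem M W)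

def etaFun (i : B) : W × ℤˣ → W × ℤˣ :=
  fun p => (cs.simple i * p.1 * cs.simple i, if p.1 = cs.simple i then -p.2 else p.2)

lemma conj_simple_eq_simple_iff (i : B) (t : W) :
    (cs.simple i * t * cs.simple i = cs.simple i) ↔ (t = cs.simple i) := by
  constructor
  · intro h
    have h2 : (cs.simple i * t) * cs.simple i = 1 * cs.simple i := by
      rw [one_mul]; exact h
    have h3 : cs.simple i * t = 1 := mul_right_cancel h2
    have h4 := congrArg (fun w => cs.simple i * w) h3
    simpa [simple_mul_simple_cancel_left] using h4
  · rintro rfl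
    rw [simple_mul_simple_self, one_mul]

lemma etaFun_invol (i : B) : Function.Involutive (etaFun cs i) := by
  rintro ⟨t, ε⟩
  simp only [etaFun]
  have hconj : cs.simple i * (cs.simple i * t * cs.simple i) * cs.simple i = t := by
    simp only [← mul_assoc, simple_mul_simple_self, one_mul]
    rw [mul_assoc, simple_mul_simple_self, mul_one]
  rw [hconj, conj_simple_eq_simple_iff]
  by_cases h : t = cs.simple i <;> simp [h]

def eta (i : B) : Equiv.Perm (W × ℤˣ) := (etaFun_invol cs i).toPerm

lemma eta_apply (i : B) (t : W) (ε : ℤˣ) :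
    eta cs i (t, ε) = (cs.simple i * t * cs.simple i, if t = cs.simple i then -ε else ε) := rfl

/-- `s j * (s i * s j)^k = ((s i * s j)⁻¹)^k * s j`. -/
lemma simple_mul_pow (i j : B) (k : ℕ) :
    cs.simple j * (cs.simple i * cs.simple j)^k
      = ((cs.simple i * cs.simple j)⁻¹)^k * cs.simple j := by
  induction k with
  | zero => simp
  | succ k ih =>
    rw [pow_succ, ← mul_assoc, ih, pow_succ]
    have h1 : cs.simple j * (cs.simple i * cs.simple j)
        = (cs.simple i * cs.simple j)⁻¹ * cs.simple j := by
      rw [mul_inv_rev, inv_simple, inv_simple, mul_assoc]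
    rw [mul_assoc, h1, ← mul_assoc]

lemma eta_mul_pow_apply (i j : B) (k : ℕ) (t : W) (ε : ℤˣ) :
    ((eta cs i * eta cs j)^k) (t, ε) =
      ((cs.simple i * cs.simple j)^k * t * (((cs.simple i * cs.simple j)⁻¹)^k),
        (-1 : ℤˣ)^(((Finset.range (2*k)).filter
          (fun l => t * cs.simple j = ((cs.simple i * cs.simple j)⁻¹)^l)).card) * ε) := by
  set c := cs.simple i * cs.simple j with hc
  have hL : ∀ n : ℕ, cs.simple j * c^n = (c⁻¹)^n * cs.simple j := by
    intro n; rw [hc]; exact simple_mul_pow cs i j n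
  have hkey : ∀ n m : ℕ, (c⁻¹)^n * cs.simple j * c^m = (c⁻¹)^(n+m) * cs.simple j := by
    intro n m; rw [mul_assoc, hL m, ← mul_assoc, ← pow_add]
  have i1 : ∀ n : ℕ, (c^n)⁻¹ = (c⁻¹)^n := fun n => (inv_pow c n).symm
  have i2 : ∀ n : ℕ, ((c⁻¹)^n)⁻¹ = c^n := by intro n; rw [← i1, inv_inv]
  induction k with
  | zero => simp
  | succ k ih =>
    rw [pow_succ', Equiv.Perm.mul_apply, ih, Equiv.Perm.mul_apply, eta_apply, eta_apply]
    -- the two new sign conditions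
    have hcond1 : (c^k * t * (c⁻¹)^k = cs.simple j) ↔ (t * cs.simple j = (c⁻¹)^(2*k)) := by
      have e1 : (c^k * t * (c⁻¹)^k = cs.simple j)
          ↔ (t = (c^k)⁻¹ * cs.simple j * ((c⁻¹)^k)⁻¹) := by
        constructor
        · intro h; rw [← h]; group
        · intro h; rw [h]; group
      have e2 : (t * cs.simple j = (c⁻¹)^(2*k))
          ↔ (t = (c⁻¹)^(2*k) * (cs.simple j)⁻¹) := by
        constructor
        · intro h; rw [← h]; group
        · intro h; rw [h]; group
      rw [e1, e2]
      have e3 : (c^k)⁻¹ * cs.simple j * ((c⁻¹)^k)⁻¹ = (c⁻¹)^(2*k) * (cs.simple j)⁻¹ := by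
        rw [i1, i2, inv_simple, hkey k k, two_mul]
      rw [e3]
    have hcond2 : (cs.simple j * (c^k * t * (c⁻¹)^k) * cs.simple j = cs.simple i)
        ↔ (t * cs.simple j = (c⁻¹)^(2*k+1)) := by
      have e1 : (cs.simple j * (c^k * t * (c⁻¹)^k) * cs.simple j = cs.simple i)
          ↔ (t = (c^k)⁻¹ * (cs.simple j * cs.simple i * cs.simple j) * ((c⁻¹)^k)⁻¹) := by
        constructor
        · intro h
          have h2 : c^k * t * (c⁻¹)^k
              = cs.simple j * cs.simple i * cs.simple j := by
            have h3 := congrArg (fun w => cs.simple j * w * cs.simple j) h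
            rw [← h3]
            rw [← mul_assoc, ← mul_assoc, simple_mul_simple_self, one_mul, mul_assoc,
              mul_assoc, simple_mul_simple_self, mul_one, ← mul_assoc]
          rw [← h2]; group
        · intro h
          rw [h]
          have h5 : cs.simple j * (c ^ k * ((c ^ k)⁻¹ * (cs.simple j * cs.simple i * cs.simple j)
              * (c⁻¹ ^ k)⁻¹) * c⁻¹ ^ k) * cs.simple j
              = cs.simple j * (cs.simple j * cs.simple i * cs.simple j) * cs.simple j := by
            group
          rw [h5]
          simp only [← mul_assoc, simple_mul_simple_self, one_mul]
          rw [mul_assoc, simple_mul_simple_self, mul_one]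
      have e2 : (t * cs.simple j = (c⁻¹)^(2*k+1))
          ↔ (t = (c⁻¹)^(2*k+1) * (cs.simple j)⁻¹) := by
        constructor
        · intro h; rw [← h]; group
        · intro h; rw [h]; group
      rw [e1, e2]
      have e4 : cs.simple j * cs.simple i * cs.simple j = c⁻¹ * cs.simple j := by
        rw [hc, mul_inv_rev, inv_simple, inv_simple, mul_assoc]
      have e3 : (c^k)⁻¹ * (cs.simple j * cs.simple i * cs.simple j) * ((c⁻¹)^k)⁻¹
          = (c⁻¹)^(2*k+1) * (cs.simple j)⁻¹ := by
        rw [e4, i1, i2, inv_simple, ← mul_assoc, ← pow_succ, hkey (k+1) k,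
          show k+1+k = 2*k+1 by omega]
      rw [e3]
    -- assemble
    have hrange : Finset.range (2*(k+1)) = insert (2*k+1) (insert (2*k) (Finset.range (2*k))) := by
      rw [show 2*(k+1) = (2*k+1)+1 by omega, Finset.range_add_one, Finset.range_add_one]
    have hfirst : cs.simple i * (cs.simple j * (c^k * t * (c⁻¹)^k) * cs.simple j) * cs.simple i
        = c^(k+1) * t * (c⁻¹)^(k+1) := by
      have e5 : (c⁻¹)^(k+1) = (c⁻¹)^k * (cs.simple j * cs.simple i) := by
        rw [pow_succ, hc, mul_inv_rev, inv_simple, inv_simple]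
      rw [e5, pow_succ' c k, hc]
      group
    refine Prod.ext ?_ ?_
    · simpa using hfirst
    · simp only
      rw [hrange, Finset.filter_insert, Finset.filter_insert]
      by_cases h1 : t * cs.simple j = (c⁻¹)^(2*k)
      · by_cases h2 : t * cs.simple j = (c⁻¹)^(2*k+1)
        · rw [if_pos h2, if_pos h1]
          rw [Finset.card_insert_of_notMem (by
            simp only [Finset.mem_insert, Finset.mem_filter, Finset.mem_range]; omega),
            Finset.card_insert_of_notMem (by
            simp only [Finset.mem_filter, Finset.mem_range]; omega)]
          rw [if_pos (hcond1.mpr h1), if_pos (hcond2.mpr h2)]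
          simp [pow_succ, mul_comm, mul_left_comm, mul_assoc]
        · rw [if_neg h2, if_pos h1]
          rw [Finset.card_insert_of_notMem (by
            simp only [Finset.mem_filter, Finset.mem_range]; omega)]
          rw [if_pos (hcond1.mpr h1), if_neg (fun hcc => h2 (hcond2.mp hcc))]
          simp [pow_succ, mul_comm, mul_left_comm, mul_assoc]
      · by_cases h2 : t * cs.simple j = (c⁻¹)^(2*k+1)
        · rw [if_pos h2, if_neg h1]
          rw [Finset.card_insert_of_notMem (by
            simp only [Finset.mem_insert, Finset.mem_filter, Finset.mem_range]; omega)]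
          rw [if_neg (fun hcc => h1 (hcond1.mp hcc)), if_pos (hcond2.mpr h2)]
          simp [pow_succ, mul_comm, mul_left_comm, mul_assoc]
        · rw [if_neg h2, if_neg h1]
          rw [if_neg (fun hcc => h1 (hcond1.mp hcc)), if_neg (fun hcc => h2 (hcond2.mp hcc))]

lemma even_card_filter_range_two_mul (m : ℕ) (d : W) (hd : d^m = 1) (x : W) :
    Even (((Finset.range (2*m)).filter (fun l => x = d^l)).card) := by
  rw [two_mul, Finset.range_add, Finset.filter_union]
  rw [Finset.card_union_of_disjoint (by
    rw [Finset.disjoint_left]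
    intro l hl hl2
    rw [Finset.mem_filter, Finset.mem_range] at hl
    simp only [Finset.mem_filter, Finset.mem_map, Finset.mem_range, addLeftEmbedding_apply] at hl2
    obtain ⟨⟨l', hl', he⟩, _⟩ := hl2
    omega)]
  rw [Finset.filter_map, Finset.card_map]
  have hcongr : ((Finset.range m).filter ((fun l => x = d^l) ∘ (addLeftEmbedding m)))
      = (Finset.range m).filter (fun l => x = d^l) := by
    apply Finset.filter_congr
    intro l _
    simp only [Function.comp_apply, addLeftEmbedding_apply, pow_add, hd, one_mul]
  rw [hcongr]
  exact ⟨_, rfl⟩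

lemma eta_liftable : M.IsLiftable (fun i => eta cs i) := by
  intro i j
  rcases Nat.eq_zero_or_pos (M i j) with h0 | hpos
  · rw [h0, pow_zero]
  · apply Equiv.ext
    rintro ⟨t, ε⟩
    rw [eta_mul_pow_apply]
    have hc : (cs.simple i * cs.simple j) ^ (M i j) = 1 := cs.simple_mul_simple_pow i j
    have hcinv : ((cs.simple i * cs.simple j)⁻¹) ^ (M i j) = 1 := by
      rw [inv_pow, hc, inv_one]
    have heven := even_card_filter_range_two_mul (M i j)
      ((cs.simple i * cs.simple j)⁻¹) hcinv (t * cs.simple j)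
    rw [hc, hcinv, Even.neg_one_pow heven]
    simp

/-- The sign representation `φ : W →* Perm (W × ℤˣ)`. -/
def phi : W →* Equiv.Perm (W × ℤˣ) := cs.lift ⟨fun i => eta cs i, eta_liftable cs⟩

lemma phi_simple (i : B) : phi cs (cs.simple i) = eta cs i :=
  cs.lift_apply_simple (eta_liftable cs) i

/-- The sign of `(w, t)`. -/
def sg (w t : W) : ℤˣ := ((phi cs w) (t, 1)).2

lemma if_neg_pull (P : Prop) [Decidable P] (x : ℤˣ) :
    (if P then -x else x) = (if P then (-1 : ℤˣ) else 1) * x := by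
  split <;> simp

lemma phi_apply_eq (w t : W) (ε : ℤˣ) :
    (phi cs w) (t, ε) = (w * t * w⁻¹, sg cs w t * ε) := by
  induction w using cs.simple_induction_left generalizing t ε with
  | one => simp [sg]
  | _ u b ih =>
    rw [map_mul, Equiv.Perm.mul_apply, ih, phi_simple, eta_apply]
    have hfst : cs.simple b * (u * t * u⁻¹) * cs.simple b
        = (cs.simple b * u) * t * (cs.simple b * u)⁻¹ := by
      rw [mul_inv_rev, inv_simple]
      group
    rw [hfst, if_neg_pull]
    refine Prod.ext rfl ?_
    simp only
    have hsg : sg cs (cs.simple b * u) t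
        = (if u * t * u⁻¹ = cs.simple b then (-1:ℤˣ) else 1) * sg cs u t := by
      rw [sg, map_mul, Equiv.Perm.mul_apply, ih t 1, phi_simple, eta_apply, if_neg_pull]
      simp [mul_comm, mul_left_comm]
    rw [hsg]
    exact (mul_assoc _ _ _).symm

lemma sg_mul (u v t : W) : sg cs (u * v) t = sg cs u (v * t * v⁻¹) * sg cs v t := by
  have h1 := phi_apply_eq cs (u * v) t 1
  rw [map_mul, Equiv.Perm.mul_apply, phi_apply_eq cs v t 1, phi_apply_eq cs u (v*t*v⁻¹)] at h1
  have h2 := congrArg Prod.snd h1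
  simp only [mul_one] at h2
  exact h2.symm

lemma sg_simple (i : B) (t : W) :
    sg cs (cs.simple i) t = if t = cs.simple i then -1 else 1 := by
  rw [sg, phi_simple, eta_apply]

lemma sg_one (t : W) : sg cs 1 t = 1 := by simp [sg]

lemma sg_inv_mul_self (w t : W) : sg cs w (w⁻¹ * t * w) * sg cs w⁻¹ t = 1 := by
  have h := sg_mul cs w w⁻¹ t
  rw [mul_inv_cancel, sg_one, inv_inv] at h
  exact h.symm

/-- For a reflection `t`, `sg t t = -1`. -/
lemma sg_refl_self (t : W) (ht : cs.IsReflection t) : sg cs t t = -1 := by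
  obtain ⟨w, i, rfl⟩ := ht
  set r := w * cs.simple i * w⁻¹ with hr
  have key : w⁻¹ * r * w = cs.simple i := by rw [hr]; group
  have h1 := sg_mul cs (w * cs.simple i) w⁻¹ r
  rw [inv_inv, key] at h1
  have hprod : w * cs.simple i * w⁻¹ = r := hr.symm
  rw [hprod] at h1
  have h2 := sg_mul cs w (cs.simple i) (cs.simple i)
  rw [inv_simple, mul_assoc, simple_mul_simple_self, mul_one] at h2
  rw [sg_simple, if_pos rfl] at h2
  have h3 := sg_inv_mul_self cs w r
  rw [key] at h3
  rw [h1, h2, mul_comm (sg cs w (cs.simple i)) (-1 : ℤˣ), mul_assoc, neg_one_mul, h3]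

lemma sg_wordProd_eq_one_of_not_mem (ω : List B) (t : W) (h : t ∉ cs.leftInvSeq ω) :
    sg cs (cs.wordProd ω)⁻¹ t = 1 := by
  induction ω using List.reverseRecOn with
  | nil => simpa using sg_one cs t
  | append_singleton ω i ih =>
    rw [← List.concat_eq_append] at h
    rw [cs.leftInvSeq_concat] at h
    rw [List.concat_eq_append, List.mem_append] at h
    push_neg at h
    obtain ⟨h1, h2⟩ := h
    rw [List.mem_singleton] at h2
    rw [cs.wordProd_append, cs.wordProd_singleton, mul_inv_rev, inv_simple, sg_mul]
    rw [ih h1, mul_one, inv_inv]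
    rw [sg_simple]
    rw [if_neg]
    intro hc
    apply h2
    rw [← hc]
    group

/-- Strong exchange, membership form. -/
theorem mem_leftInvSeq_of_isLeftInversion {ω : List B} (hω : cs.IsReduced ω) {t : W}
    (ht : cs.IsReflection t)
    (hl : cs.length (t * cs.wordProd ω) < cs.length (cs.wordProd ω)) :
    t ∈ cs.leftInvSeq ω := by
  by_contra hmem
  have h1 : sg cs (cs.wordProd ω)⁻¹ t = 1 := sg_wordProd_eq_one_of_not_mem cs ω t hmem
  obtain ⟨α, hα, hu⟩ := cs.exists_reduced_word' (t * cs.wordProd ω)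
  have h2 : sg cs (cs.wordProd α)⁻¹ t = -1 := by
    rw [← hu, mul_inv_rev, sg_mul, ht.inv]
    rw [show t * t * t⁻¹ = t by group]
    rw [h1, sg_refl_self cs t ht, one_mul]
  have h3 : t ∈ cs.leftInvSeq α := by
    by_contra hmem2
    rw [sg_wordProd_eq_one_of_not_mem cs α t hmem2] at h2
    simp at h2
  have h4 := cs.isLeftInversion_of_mem_leftInvSeq hα h3
  have h5 : t * cs.wordProd α = cs.wordProd ω := by
    rw [← hu, ← mul_assoc, ht.mul_self, one_mul]
  have h6 := h4.2
  rw [h5, ← hu] at h6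
  omega

/-- Strong exchange, equation form. -/
theorem strong_exchange {ω : List B} (hω : cs.IsReduced ω) {t : W} (ht : cs.IsReflection t)
    (hl : cs.length (t * cs.wordProd ω) < cs.length (cs.wordProd ω)) :
    ∃ j, ∃ hj : j < ω.length, t = cs.wordProd (ω.take j) * cs.simple (ω.get ⟨j, hj⟩)
        * (cs.wordProd (ω.take j))⁻¹
      ∧ t * cs.wordProd ω = cs.wordProd (ω.eraseIdx j) := by
  have hmem := mem_leftInvSeq_of_isLeftInversion cs hω ht hl
  obtain ⟨j, hj, hget⟩ := List.getElem_of_mem hmem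
  have hjlen : j < ω.length := by
    rw [cs.length_leftInvSeq] at hj
    exact hj
  have hgetD : (cs.leftInvSeq ω).getD j 1 = t := by
    rw [List.getD_eq_getElem _ _ hj, hget]
  refine ⟨j, hjlen, ?_, ?_⟩
  · rw [← hgetD, cs.getD_leftInvSeq]
    congr 2
    rw [List.getElem?_eq_getElem hjlen]
    rfl
  · rw [← hgetD]
    exact cs.getD_leftInvSeq_mul_wordProd ω j

end PermRep

section Parabolic

variable {B : Type*} {W : Type*} [Group W] {M : CoxeterMatrix B} (cs : CoxeterSystem M W)
variable (I : Set B)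

lemma wordProd_mem_closure (ω : List B) (h : ∀ b ∈ ω, b ∈ I) :
    cs.wordProd ω ∈ Subgroup.closure (cs.simple '' I) := by
  induction ω with
  | nil => rw [cs.wordProd_nil]; exact Subgroup.one_mem _
  | cons b ω ih =>
    rw [cs.wordProd_cons]
    exact Subgroup.mul_mem _
      (Subgroup.subset_closure ⟨b, h b (List.mem_cons_self), rfl⟩)
      (ih (fun b' hb' => h b' (List.mem_cons_of_mem b hb')))

lemma exists_word_of_mem_closure {w : W} (hw : w ∈ Subgroup.closure (cs.simple '' I)) :
    ∃ ω : List B, (∀ b ∈ ω, b ∈ I) ∧ w = cs.wordProd ω := by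
  induction hw using Subgroup.closure_induction with
  | mem x hx =>
    obtain ⟨b, hb, rfl⟩ := hx
    exact ⟨[b], by simpa using hb, (cs.wordProd_singleton b).symm⟩
  | one => exact ⟨[], by simp, by simp⟩
  | mul x y hx hy ihx ihy =>
    obtain ⟨ω₁, h₁, rfl⟩ := ihx
    obtain ⟨ω₂, h₂, rfl⟩ := ihy
    exact ⟨ω₁ ++ ω₂, by
      intro b hb
      rcases List.mem_append.mp hb with h | h
      exacts [h₁ b h, h₂ b h], (cs.wordProd_append ω₁ ω₂).symm⟩
  | inv x hx ihx =>
    obtain ⟨ω, h₁, rfl⟩ := ihx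
    exact ⟨ω.reverse, fun b hb => h₁ b (List.mem_reverse.mp hb),
      (cs.wordProd_reverse ω).symm⟩

open scoped Classical in
lemma exists_reduced_word_aux : ∀ (n : ℕ) (ω : List B), ω.length = n → (∀ b ∈ ω, b ∈ I) →
    ∃ ω' : List B, (∀ b ∈ ω', b ∈ I) ∧ cs.IsReduced ω' ∧ cs.wordProd ω' = cs.wordProd ω := by
  intro n
  induction n using Nat.strong_induction_on with
  | _ n ih =>
    intro ω hlen hsub
    by_cases hred : cs.IsReduced ω
    · exact ⟨ω, hsub, hred, rfl⟩
    · have hn2 : 2 ≤ n := by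
        by_contra hc
        push_neg at hc
        interval_cases n
        · rw [List.length_eq_zero_iff] at hlen
          refine hred ?_
          rw [hlen]
          unfold CoxeterSystem.IsReduced
          simp
        · obtain ⟨b', rfl⟩ := List.length_eq_one_iff.mp hlen
          refine hred ?_
          unfold CoxeterSystem.IsReduced
          simp [cs.wordProd_singleton, cs.length_simple]
      have hex : ∃ j, ¬ cs.IsReduced (ω.take j) := ⟨ω.length, by rwa [List.take_length]⟩
      obtain ⟨j₀, hj₀, hmin⟩ : ∃ j₀, ¬cs.IsReduced (ω.take j₀)
          ∧ ∀ m, m < j₀ → cs.IsReduced (ω.take m) := by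
        refine ⟨Nat.find hex, Nat.find_spec hex, ?_⟩
        intro m hm
        by_contra hc
        exact absurd (Nat.find_le hc) (Nat.not_le.mpr hm)
      rcases j₀ with _ | j
      · exact absurd (by unfold CoxeterSystem.IsReduced; simp) hj₀
      have hjlen : j < ω.length := by
        by_contra hc
        push_neg at hc
        apply hred
        have h5 := hmin j (by omega)
        rwa [List.take_of_length_le (by omega)] at h5
      have hα : cs.IsReduced (ω.take j) := hmin j (by omega)
      set α := ω.take j with hαdef
      have hjred : ¬ cs.IsReduced (ω.take (j+1)) := hj₀
      have htake : ω.take (j+1) = α ++ [ω.get ⟨j, hjlen⟩] := by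
        rw [hαdef, List.take_succ, List.getElem?_eq_getElem hjlen]
        rfl
      set b := ω.get ⟨j, hjlen⟩ with hbdef
      have hαlen : α.length = j := by
        rw [hαdef, List.length_take]
        omega
      have hlt : cs.length (cs.wordProd α * cs.simple b) < cs.length (cs.wordProd α) + 1 := by
        rw [htake, CoxeterSystem.IsReduced] at hjred
        rw [cs.wordProd_append, cs.wordProd_singleton] at hjred
        have h2 := cs.length_wordProd_le (α ++ [b])
        rw [cs.wordProd_append, cs.wordProd_singleton] at h2
        have h3 : (α ++ [b]).length = j + 1 := by simp [hαlen]
        rw [h3] at hjred h2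
        have h4 : cs.length (cs.wordProd α) = j := by
          rw [hα]
          exact hαlen
        omega
      have hdesc : cs.length (cs.wordProd α * cs.simple b) < cs.length (cs.wordProd α) := by
        rcases cs.length_mul_simple (cs.wordProd α) b with h | h <;> omega
      set t := cs.wordProd α * cs.simple b * (cs.wordProd α)⁻¹ with htdef
      have ht : cs.IsReflection t := ⟨cs.wordProd α, b, rfl⟩
      have htl : cs.length (t * cs.wordProd α) < cs.length (cs.wordProd α) := by
        rw [htdef]
        rw [show cs.wordProd α * cs.simple b * (cs.wordProd α)⁻¹ * cs.wordProd α
          = cs.wordProd α * cs.simple b by group]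
        exact hdesc
      obtain ⟨l, hl, _, heq⟩ := strong_exchange cs hα ht htl
      have heq2 : cs.wordProd α * cs.simple b = cs.wordProd (α.eraseIdx l) := by
        rw [← heq, htdef]
        group
      set ω'' := α.eraseIdx l ++ ω.drop (j+1) with hω''
      have hprod : cs.wordProd ω'' = cs.wordProd ω := by
        conv_rhs => rw [← List.take_append_drop (j+1) ω]
        rw [hω'', cs.wordProd_append, cs.wordProd_append, htake, cs.wordProd_append,
          cs.wordProd_singleton, heq2]
      have hsub'' : ∀ b' ∈ ω'', b' ∈ I := by
        intro b' hb'
        rcases List.mem_append.mp hb' with h | h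
        · have h6 : b' ∈ α := List.eraseIdx_subset h
          rw [hαdef] at h6
          exact hsub b' (List.take_subset _ _ h6)
        · exact hsub b' (List.drop_subset _ _ h)
      have hlen'' : ω''.length = n - 2 := by
        rw [hω'', List.length_append, List.length_eraseIdx, if_pos hl, List.length_drop, hαlen]
        omega
      obtain ⟨ω', hsub', hred', hprod'⟩ := ih (n-2) (by omega) ω'' hlen'' hsub''
      exact ⟨ω', hsub', hred', by rw [hprod', hprod]⟩

/-- Every element of the parabolic subgroup has a reduced word with letters in `I`. -/
lemma exists_reduced_word_in {w : W} (hw : w ∈ Subgroup.closure (cs.simple '' I)) :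
    ∃ ω : List B, (∀ b ∈ ω, b ∈ I) ∧ cs.IsReduced ω ∧ w = cs.wordProd ω := by
  obtain ⟨ω, hsub, rfl⟩ := exists_word_of_mem_closure cs I hw
  obtain ⟨ω', h1, h2, h3⟩ := exists_reduced_word_aux cs I ω.length ω rfl hsub
  exact ⟨ω', h1, h2, h3.symm⟩

/-- If a simple reflection lies in the parabolic subgroup `W_I`, then its index is in `I`. -/
lemma mem_of_simple_mem_closure (b : B) (hb : cs.simple b ∈ Subgroup.closure (cs.simple '' I)) :
    b ∈ I := by
  obtain ⟨ω, hsub, hred, heq⟩ := exists_reduced_word_in cs I hb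
  have hlen : ω.length = 1 := by
    have h1 : cs.length (cs.wordProd ω) = ω.length := hred
    rw [← heq, cs.length_simple] at h1
    omega
  obtain ⟨b', rfl⟩ := List.length_eq_one_iff.mp hlen
  rw [cs.wordProd_singleton] at heq
  have hbb : b = b' := simple_injective M cs heq
  rw [hbb]
  exact hsub b' (List.mem_singleton_self b')

/-- Key lemma: for `t ∉ I`, no element of `W_I` has `s t` as a left descent. -/
lemma length_simple_mul_of_not_mem {z : W} (hz : z ∈ Subgroup.closure (cs.simple '' I))
    {t : B} (ht : t ∉ I) :
    cs.length z < cs.length (cs.simple t * z) := by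
  by_contra hc
  push_neg at hc
  have hne := cs.length_simple_mul_ne z t
  have hlt : cs.length (cs.simple t * z) < cs.length z := by omega
  obtain ⟨ω, hsub, hred, rfl⟩ := exists_reduced_word_in cs I hz
  obtain ⟨j, hj, hrefl, _⟩ := strong_exchange cs hred (cs.isReflection_simple t) hlt
  apply ht
  apply mem_of_simple_mem_closure cs I
  rw [hrefl]
  have h1 : cs.wordProd (ω.take j) ∈ Subgroup.closure (cs.simple '' I) :=
    wordProd_mem_closure cs I _ (fun b hb => hsub b (List.take_subset _ _ hb))
  have h2 : cs.simple (ω.get ⟨j, hj⟩) ∈ Subgroup.closure (cs.simple '' I) :=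
    Subgroup.subset_closure ⟨_, hsub _ (List.get_mem ω _), rfl⟩
  exact Subgroup.mul_mem _ (Subgroup.mul_mem _ h1 h2) (Subgroup.inv_mem _ h1)

/-- Left descents of elements of `W_I` are (simple reflections) in `W_I`. -/
lemma simple_mem_of_isLeftDescent {w : W} (hw : w ∈ Subgroup.closure (cs.simple '' I))
    {i : B} (hi : cs.length (cs.simple i * w) < cs.length w) :
    i ∈ I := by
  obtain ⟨ω, hsub, hred, rfl⟩ := exists_reduced_word_in cs I hw
  obtain ⟨j, hj, hrefl, _⟩ := strong_exchange cs hred (cs.isReflection_simple i) hi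
  apply mem_of_simple_mem_closure cs I
  rw [hrefl]
  have h1 : cs.wordProd (ω.take j) ∈ Subgroup.closure (cs.simple '' I) :=
    wordProd_mem_closure cs I _ (fun b hb => hsub b (List.take_subset _ _ hb))
  have h2 : cs.simple (ω.get ⟨j, hj⟩) ∈ Subgroup.closure (cs.simple '' I) :=
    Subgroup.subset_closure ⟨_, hsub _ (List.get_mem ω _), rfl⟩
  exact Subgroup.mul_mem _ (Subgroup.mul_mem _ h1 h2) (Subgroup.inv_mem _ h1)

/-- If `M i t = 2` then the corresponding simple reflections commute. -/
lemma simple_commute_of_M_eq_two {i t : B} (h : M i t = 2) :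
    cs.simple i * cs.simple t = cs.simple t * cs.simple i := by
  have h1 := cs.simple_mul_simple_pow i t
  rw [h, pow_two] at h1
  -- (s i * s t) * (s i * s t) = 1
  have h2 : (cs.simple i * cs.simple t)⁻¹ = cs.simple t * cs.simple i := by
    rw [mul_inv_rev, inv_simple, inv_simple]
  rw [← h2]
  exact eq_inv_of_mul_eq_one_left h1

/-- **Main lemma** (forward direction): if `w ∈ W_I` commutes with `s t`, `t ∉ I`, then
`w ∈ W_{I(t)}`. -/
lemma mem_closure_commuting_of_commute (t : B) (ht : t ∉ I) :
    ∀ (n : ℕ) (w : W), cs.length w = n → w ∈ Subgroup.closure (cs.simple '' I) →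
      w * cs.simple t = cs.simple t * w →
      w ∈ Subgroup.closure (cs.simple '' {s | s ∈ I ∧ M s t = 2}) := by
  intro n
  induction n using Nat.strong_induction_on with
  | _ n ih =>
    intro w hlen hw hcomm
    rcases eq_or_ne w 1 with rfl | hne
    · exact Subgroup.one_mem _
    · obtain ⟨i, hi⟩ := cs.exists_leftDescent_of_ne_one hne
      rw [CoxeterSystem.IsLeftDescent] at hi
      have hiI : i ∈ I := simple_mem_of_isLeftDescent cs I hw hi
      -- key claim : M i t = 2
      have hit : i ≠ t := fun hc => ht (hc ▸ hiI)
      have hMit : M i t = 2 := by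
        -- consider v = s t * w, of length ℓ w + 1, with reduced word t :: ω
        obtain ⟨ω, hsub, hred, hwω⟩ := exists_reduced_word_in cs I hw
        have hlv : cs.length w < cs.length (cs.simple t * w) :=
          length_simple_mul_of_not_mem cs I hw ht
        have hlv2 : cs.length (cs.simple t * w) = cs.length w + 1 := by
          have := cs.length_simple_mul_ne w t
          have h8 := cs.length_mul_le (cs.simple t) w
          rw [cs.length_simple] at h8
          omega
        have hredtv : cs.IsReduced (t :: ω) := by
          unfold CoxeterSystem.IsReduced
          rw [cs.wordProd_cons, ← hwω, hlv2, List.length_cons]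
          rw [CoxeterSystem.IsReduced] at hred
          rw [hwω, hred]
        have hdesc : cs.length (cs.simple i * cs.wordProd (t :: ω))
            < cs.length (cs.wordProd (t :: ω)) := by
          rw [cs.wordProd_cons, ← hwω]
          have h9 : cs.simple i * (cs.simple t * w) = cs.simple i * w * cs.simple t := by
            rw [← hcomm]; group
          rw [h9]
          have h10 := cs.length_mul_le (cs.simple i * w) (cs.simple t)
          rw [cs.length_simple] at h10
          rw [hlv2]
          omega
        obtain ⟨j, hj, hrefl, _⟩ := strong_exchange cs hredtv (cs.isReflection_simple i) hdesc
        rcases j with _ | j'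
        · -- j = 0 : s i = s t, contradiction
          exfalso
          simp only [List.take_zero, cs.wordProd_nil, one_mul, inv_one, mul_one] at hrefl
          have : cs.simple i = cs.simple t := by simpa using hrefl
          exact hit (simple_injective M cs this)
        · -- j = j' + 1 : s i = s t * r * s t with r a reflection of W_I
          have hj2 : j' < ω.length := by simpa using hj
          have htake : List.take (j' + 1) (t :: ω) = t :: List.take j' ω := rfl
          rw [htake, cs.wordProd_cons] at hrefl
          have hget : (t :: ω).get ⟨j' + 1, hj⟩ = ω.get ⟨j', hj2⟩ := rfl
          rw [hget] at hrefl
          set u := cs.wordProd (ω.take j') with hu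
          set r := u * cs.simple (ω.get ⟨j', hj2⟩) * u⁻¹ with hr
          have hrK : r ∈ Subgroup.closure (cs.simple '' I) := by
            have h1 : u ∈ Subgroup.closure (cs.simple '' I) :=
              wordProd_mem_closure cs I _ (fun b hb => hsub b (List.take_subset _ _ hb))
            have h2 : cs.simple (ω.get ⟨j', hj2⟩) ∈ Subgroup.closure (cs.simple '' I) :=
              Subgroup.subset_closure ⟨_, hsub _ (List.get_mem ω ⟨j', hj2⟩), rfl⟩
            exact Subgroup.mul_mem _ (Subgroup.mul_mem _ h1 h2) (Subgroup.inv_mem _ h1)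
          have hsitr : cs.simple t * cs.simple i * cs.simple t = r := by
            rw [hrefl, hr]
            rw [show cs.simple t * (cs.simple t * u * cs.simple (ω.get ⟨j', hj2⟩)
                * (cs.simple t * u)⁻¹) * cs.simple t
              = (cs.simple t * cs.simple t) * (u * cs.simple (ω.get ⟨j', hj2⟩) * u⁻¹)
                * ((cs.simple t)⁻¹ * cs.simple t) by group]
            rw [simple_mul_simple_self, inv_simple, simple_mul_simple_self, one_mul, mul_one]
          -- z = s t * s i * s t ∈ W_I has odd length ≤ 3; length 3 is impossible
          have hzK : cs.simple t * cs.simple i * cs.simple t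
              ∈ Subgroup.closure (cs.simple '' I) := hsitr ▸ hrK
          have hlz3 : cs.length (cs.simple t * cs.simple i * cs.simple t) ≤ 3 := by
            have h1 := cs.length_mul_le (cs.simple t * cs.simple i) (cs.simple t)
            have h2 := cs.length_mul_le (cs.simple t) (cs.simple i)
            simp only [cs.length_simple] at h1 h2
            omega
          have hlzodd : cs.length (cs.simple t * cs.simple i * cs.simple t) % 2 = 1 := by
            have h1 := cs.length_mul_mod_two (cs.simple t * cs.simple i) (cs.simple t)
            have h2 := cs.length_mul_mod_two (cs.simple t) (cs.simple i)
            simp only [cs.length_simple] at h1 h2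
            omega
          have hlz : cs.length (cs.simple t * cs.simple i * cs.simple t) = 1 := by
            rcases Nat.lt_or_ge (cs.length (cs.simple t * cs.simple i * cs.simple t)) 3
              with h | h
            · omega
            · exfalso
              have h3 : cs.length (cs.simple t * cs.simple i * cs.simple t) = 3 := by omega
              have h4 : cs.length (cs.simple t * (cs.simple t * cs.simple i * cs.simple t))
                  ≤ 2 := by
                rw [show cs.simple t * (cs.simple t * cs.simple i * cs.simple t)
                  = cs.simple i * cs.simple t by
                    rw [← mul_assoc, ← mul_assoc, simple_mul_simple_self, one_mul]]
                have h5 := cs.length_mul_le (cs.simple i) (cs.simple t)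
                simp only [cs.length_simple] at h5
                omega
              have h6 := length_simple_mul_of_not_mem cs I hzK ht
              omega
          obtain ⟨j'', hj''⟩ := cs.length_eq_one_iff.mp hlz
          exact M_eq_two_of_conj_simple M cs hit hj''
      -- now induct on s i * w
      have hw' : cs.simple i * w ∈ Subgroup.closure (cs.simple '' I) :=
        Subgroup.mul_mem _ (Subgroup.subset_closure ⟨i, hiI, rfl⟩) hw
      have hcomm' : (cs.simple i * w) * cs.simple t = cs.simple t * (cs.simple i * w) := by
        rw [mul_assoc, hcomm, ← mul_assoc, simple_commute_of_M_eq_two cs hMit, mul_assoc]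
      have hmem' := ih (cs.length (cs.simple i * w)) (by omega) (cs.simple i * w) rfl
        hw' hcomm'
      have hfin : w = cs.simple i * (cs.simple i * w) := by
        rw [simple_mul_simple_cancel_left]
      rw [hfin]
      exact Subgroup.mul_mem _
        (Subgroup.subset_closure ⟨i, ⟨hiI, hMit⟩, rfl⟩) hmem'

/-- Backward direction: elements of `W_{I(t)}` commute with `s t`. -/
lemma commute_of_mem_closure_commuting (t : B) {w : W}
    (hw : w ∈ Subgroup.closure (cs.simple '' {s | s ∈ I ∧ M s t = 2})) :
    w * cs.simple t = cs.simple t * w := by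
  induction hw using Subgroup.closure_induction with
  | mem x hx =>
    obtain ⟨b, ⟨hbI, hb2⟩, rfl⟩ := hx
    exact simple_commute_of_M_eq_two cs hb2
  | one => rw [one_mul, mul_one]
  | mul x y hx hy ihx ihy =>
    rw [mul_assoc, ihy, ← mul_assoc, ihx, mul_assoc]
  | inv x hx ihx =>
    calc x⁻¹ * cs.simple t = x⁻¹ * (cs.simple t * x) * x⁻¹ := by group
    _ = x⁻¹ * (x * cs.simple t) * x⁻¹ := by rw [ihx]
    _ = cs.simple t * x⁻¹ := by group

end Parabolic

end CoxAux

open CoxAux in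
/-- Let `(W, S)` be a Coxeter system, `I ⊆ S`, and `t ∈ S \ I`.
Then the centraliser of `t` in the parabolic subgroup `W_I` equals `W_{I(t)}` where
`I(t) = {s ∈ I : m_{s,t} = 2}`; consequently the conjugacy orbit
`t^{W_I} = {w t w⁻¹ : w ∈ W_I}` is in bijection with `W_I / W_{I(t)}`. -/
theorem centralizer_of_simple_in_parabolic {B W : Type*} [Group W] {M : CoxeterMatrix B}
    (cs : CoxeterSystem M W) (I : Set B) (t : B) (ht : t ∉ I) :
    (∀ w ∈ Subgroup.closure (cs.simple '' I),
      (w * cs.simple t = cs.simple t * w ↔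
        w ∈ Subgroup.closure (cs.simple '' {s | s ∈ I ∧ M s t = 2}))) ∧
    Nonempty
      ({x : W // ∃ w ∈ Subgroup.closure (cs.simple '' I), x = w * cs.simple t * w⁻¹} ≃
        (Subgroup.closure (cs.simple '' I) ⧸
          ((Subgroup.closure (cs.simple '' {s | s ∈ I ∧ M s t = 2})).subgroupOf
            (Subgroup.closure (cs.simple '' I))))) := by
  have hcent : ∀ w ∈ Subgroup.closure (cs.simple '' I),
      (w * cs.simple t = cs.simple t * w ↔
        w ∈ Subgroup.closure (cs.simple '' {s | s ∈ I ∧ M s t = 2})) := by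
    intro w hw
    constructor
    · intro hcomm
      exact mem_closure_commuting_of_commute cs I t ht (cs.length w) w rfl hw hcomm
    · intro hmem
      exact commute_of_mem_closure_commuting cs I t hmem
  refine ⟨hcent, ?_⟩
  set K := Subgroup.closure (cs.simple '' I) with hK
  set K₂ := Subgroup.closure (cs.simple '' {s | s ∈ I ∧ M s t = 2}) with hK₂
  set H := K₂.subgroupOf K with hH
  -- the map from the quotient to the orbit
  let f : K ⧸ H → {x : W // ∃ w ∈ K, x = w * cs.simple t * w⁻¹} := fun q =>
    Quotient.liftOn' q
      (fun g => (⟨(g : W) * cs.simple t * (g : W)⁻¹, (g : W), g.2, rfl⟩ :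
        {x : W // ∃ w ∈ K, x = w * cs.simple t * w⁻¹}))
      (by
        rintro g₁ g₂ hrel
        rw [QuotientGroup.leftRel_apply] at hrel
        rw [Subgroup.mem_subgroupOf] at hrel
        have hcomm : ((g₁⁻¹ * g₂ : K) : W) * cs.simple t
            = cs.simple t * ((g₁⁻¹ * g₂ : K) : W) :=
          commute_of_mem_closure_commuting cs I t hrel
        apply Subtype.ext
        simp only
        have hg2 : (g₂ : W) = (g₁ : W) * ((g₁⁻¹ * g₂ : K) : W) := by
          push_cast
          group
        rw [hg2]
        set u := ((g₁⁻¹ * g₂ : K) : W) with hu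
        rw [show (g₁ : W) * u * cs.simple t * ((g₁ : W) * u)⁻¹
          = (g₁ : W) * (u * cs.simple t * u⁻¹) * (g₁ : W)⁻¹ by group]
        rw [show u * cs.simple t * u⁻¹ = cs.simple t by rw [hcomm]; group])
  have hsurj : Function.Surjective f := by
    rintro ⟨x, w, hw, rfl⟩
    exact ⟨QuotientGroup.mk (⟨w, hw⟩ : K), rfl⟩
  have hinj : Function.Injective f := by
    intro q₁ q₂
    induction q₁ using Quotient.inductionOn' with
    | h g₁ =>
    induction q₂ using Quotient.inductionOn' with
    | h g₂ =>
    intro heq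
    have heq2 : (g₁ : W) * cs.simple t * (g₁ : W)⁻¹ = (g₂ : W) * cs.simple t * (g₂ : W)⁻¹ := by
      have := congrArg Subtype.val heq
      simpa [f] using this
    apply Quotient.sound'
    rw [QuotientGroup.leftRel_apply, Subgroup.mem_subgroupOf]
    have hcomm : ((g₁⁻¹ * g₂ : K) : W) * cs.simple t = cs.simple t * ((g₁⁻¹ * g₂ : K) : W) := by
      push_cast
      have h3 : cs.simple t * ((g₁ : W)⁻¹ * (g₂ : W))
          = (g₁ : W)⁻¹ * ((g₁ : W) * cs.simple t * (g₁ : W)⁻¹) * (g₂ : W) := by group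
      have h4 : ((g₁ : W)⁻¹ * (g₂ : W)) * cs.simple t
          = (g₁ : W)⁻¹ * ((g₂ : W) * cs.simple t * (g₂ : W)⁻¹) * (g₂ : W) := by group
      rw [h3, h4, heq2]
    exact (hcent _ (g₁⁻¹ * g₂ : K).2).mp hcomm
  exact ⟨(Equiv.ofBijective f ⟨hinj, hsurj⟩).symm⟩
end
end

section
/- Let (W,S) be a Coxeter system, I ⊆ S, and let t, t' be two distinct elements of S \ I. Then the sets t^{W_I} = {w t w^{-1} : w ∈ W_I} and t'^{W_I} = {w t' w^{-1} : w ∈ W_I} are disjoint. -/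
noncomputable section
open Real

namespace DisjConjAux

variable {B : Type*} (M : CoxeterMatrix B)

def kk (x y : B) : ℝ := -Real.cos (Real.pi / (M x y : ℝ))

lemma kk_symm (x y : B) : kk M x y = kk M y x := by rw [kk, kk, M.symmetric]

lemma kk_diag (x : B) : kk M x x = 1 := by
  simp [kk, M.diagonal x, Real.cos_pi]

def al (x : B) : B →₀ ℝ := Finsupp.single x 1

def gl (x : B) : (B →₀ ℝ) →ₗ[ℝ] ℝ := Finsupp.linearCombination ℝ (kk M x)

@[simp] lemma gl_single (x y : B) (r : ℝ) :
    gl M x (Finsupp.single y r) = r * kk M x y := by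
  simp [gl, Finsupp.linearCombination_single, smul_eq_mul]

@[simp] lemma gl_al (x y : B) : gl M x (al y) = kk M x y := by simp [al]

def sig (x : B) : Module.End ℝ (B →₀ ℝ) :=
  LinearMap.id - (gl M x).smulRight ((2:ℝ) • al x)

lemma sig_apply (x : B) (v : B →₀ ℝ) :
    sig M x v = v - (2 * gl M x v) • al x := by
  simp [sig, LinearMap.smulRight_apply, smul_smul, mul_comm]

lemma sig_sig (x : B) (v : B →₀ ℝ) : sig M x (sig M x v) = v := by
  rw [sig_apply, sig_apply, map_sub, map_smul, gl_al, kk_diag, smul_eq_mul, mul_one]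
  module

lemma trig1 (θ a b κ : ℝ) :
    ((4*Real.cos θ^2-1)*a - 2*Real.cos θ*b) * Real.sin ((2*κ+1)*θ)
      - (2*Real.cos θ*a - b) * Real.sin (2*κ*θ)
    = a * Real.sin ((2*(κ+1)+1)*θ) - b * Real.sin (2*(κ+1)*θ) := by
  rw [show (2*(κ+1)+1)*θ = (2*κ*θ + θ) + (θ + θ) by ring,
      show (2*(κ+1))*θ = (2*κ*θ + θ) + θ by ring,
      show (2*κ+1)*θ = 2*κ*θ + θ by ring]
  simp only [Real.sin_add, Real.cos_add]
  linear_combination (3*Real.cos θ*a*Real.sin (2*κ*θ) + a*Real.cos (2*κ*θ)*Real.sin θ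
    - b*Real.sin (2*κ*θ)) * (Real.sin_sq_add_cos_sq θ)

lemma trig2 (θ a b κ : ℝ) :
    ((4*Real.cos θ^2-1)*a - 2*Real.cos θ*b) * Real.sin (2*κ*θ)
      - (2*Real.cos θ*a - b) * Real.sin ((2*κ-1)*θ)
    = a * Real.sin (2*(κ+1)*θ) - b * Real.sin ((2*(κ+1)-1)*θ) := by
  rw [show (2*(κ+1))*θ = ((2*κ-1)*θ + θ) + (θ + θ) by ring,
      show (2*(κ+1)-1)*θ = ((2*κ-1)*θ + θ) + θ by ring,
      show (2*κ)*θ = (2*κ-1)*θ + θ by ring]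
  simp only [Real.sin_add, Real.cos_add]
  linear_combination (3*Real.cos θ*a*Real.sin ((2*κ-1)*θ) + a*Real.cos ((2*κ-1)*θ)*Real.sin θ
    - b*Real.sin ((2*κ-1)*θ)) * (Real.sin_sq_add_cos_sq θ)

lemma pow_fixed {T : Module.End ℝ (B →₀ ℝ)} {w : B →₀ ℝ} (h : T w = w) (k : ℕ) :
    (T ^ k) w = w := by
  induction k with
  | zero => simp
  | succ k ih => rw [pow_succ, Module.End.mul_apply, h, ih]

lemma isLiftable : M.IsLiftable (sig M) := by
  intro x y
  rcases eq_or_ne x y with rfl | hxy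
  · rw [M.diagonal, pow_one]
    exact LinearMap.ext fun v => by
      rw [Module.End.mul_apply, sig_sig, Module.End.one_apply]
  · rcases Nat.eq_zero_or_pos (M x y) with h0 | hpos
    · rw [h0, pow_zero]
    · have hm2 : 2 ≤ M x y := by
        have := M.off_diagonal x y hxy; omega
      have hmR1 : (1:ℝ) < (M x y : ℝ) := by exact_mod_cast hm2.trans_lt' one_lt_two
      have hmR0 : ((M x y : ℕ) : ℝ) ≠ 0 := by positivity
      set θ : ℝ := Real.pi / (M x y : ℝ) with hθ
      have hθpos : 0 < θ := div_pos Real.pi_pos (by positivity)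
      have hθlt : θ < Real.pi := div_lt_self Real.pi_pos hmR1
      have hsin : 0 < Real.sin θ := Real.sin_pos_of_pos_of_lt_pi hθpos hθlt
      have hc : kk M x y = -Real.cos θ := rfl
      have hcyx : kk M y x = -Real.cos θ := by rw [kk_symm M y x]; exact hc
      set T : Module.End ℝ (B →₀ ℝ) := sig M x * sig M y with hT
      have hplane : ∀ a b : ℝ, T (a • al x + b • al y)
          = ((4*Real.cos θ^2-1)*a - 2*Real.cos θ*b) • al x + (2*Real.cos θ*a - b) • al y := by
        intro a b
        rw [hT, Module.End.mul_apply, sig_apply, sig_apply]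
        simp only [map_add, map_smul, map_sub, gl_al, kk_diag, hc, hcyx, smul_eq_mul]
        module
      have hpow : ∀ k : ℕ, ∀ a b : ℝ, (T ^ k) (a • al x + b • al y)
          = ((a * Real.sin ((2*(k:ℝ)+1)*θ) - b * Real.sin (2*(k:ℝ)*θ)) / Real.sin θ) • al x
            + ((a * Real.sin (2*(k:ℝ)*θ) - b * Real.sin ((2*(k:ℝ)-1)*θ)) / Real.sin θ)
              • al (B := B) y := by
        intro k
        induction k with
        | zero =>
          intro a b
          simp only [pow_zero, Module.End.one_apply, Nat.cast_zero]
          rw [show (2*(0:ℝ)+1)*θ = θ by ring, show 2*(0:ℝ)*θ = 0 by ring,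
            show (2*(0:ℝ)-1)*θ = -θ by ring, Real.sin_zero, Real.sin_neg]
          rw [show (a*Real.sin θ - b*0)/Real.sin θ = a by field_simp; ring,
            show (a*0 - b*(-Real.sin θ))/Real.sin θ = b by field_simp; ring]
        | succ k ih =>
          intro a b
          rw [pow_succ, Module.End.mul_apply, hplane, ih]
          push_cast
          rw [trig1 θ a b (k:ℝ), trig2 θ a b (k:ℝ)]
      have h2pi : 2*((M x y : ℕ):ℝ)*θ = 2*Real.pi := by
        rw [hθ]; field_simp
      have s1 : Real.sin (2*((M x y : ℕ):ℝ)*θ) = 0 := by rw [h2pi, Real.sin_two_pi]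
      have s2 : Real.sin ((2*((M x y : ℕ):ℝ)+1)*θ) = Real.sin θ := by
        rw [show (2*((M x y : ℕ):ℝ)+1)*θ = θ + 2*((M x y : ℕ):ℝ)*θ by ring, h2pi,
          Real.sin_add_two_pi]
      have s3 : Real.sin ((2*((M x y : ℕ):ℝ)-1)*θ) = -Real.sin θ := by
        rw [show (2*((M x y : ℕ):ℝ)-1)*θ = 2*((M x y : ℕ):ℝ)*θ - θ by ring, h2pi,
          Real.sin_two_pi_sub]
      have hd2 : Real.cos θ^2 < 1 := by nlinarith [Real.sin_sq_add_cos_sq θ, hsin]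
      have hDne : (1 : ℝ) - (-Real.cos θ)^2 ≠ 0 := by nlinarith
      apply LinearMap.ext
      intro v
      rw [Module.End.one_apply]
      set c : ℝ := -Real.cos θ with hcdef
      set p : ℝ := gl M x v with hp
      set q : ℝ := gl M y v with hq
      set a : ℝ := (p - c*q)/(1 - c^2) with ha
      set b : ℝ := (q - c*p)/(1 - c^2) with hb
      set w : B →₀ ℝ := v - (a • al x + b • al y) with hw
      have hwx : gl M x w = 0 := by
        rw [hw]
        simp only [map_sub, map_add, map_smul, gl_al, kk_diag, hc, hcyx, ← hcdef, ← hp,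
          smul_eq_mul, ha, hb]
        field_simp
        ring
      have hwy : gl M y w = 0 := by
        rw [hw]
        simp only [map_sub, map_add, map_smul, gl_al, kk_diag, hc, hcyx, ← hcdef, ← hq,
          smul_eq_mul, ha, hb]
        field_simp
        ring
      have hfix : T w = w := by
        rw [hT, Module.End.mul_apply, sig_apply M y w, hwy, mul_zero, zero_smul, sub_zero,
          sig_apply M x w, hwx, mul_zero, zero_smul, sub_zero]
      have hv : v = (a • al x + b • al y) + w := by rw [hw]; abel
      rw [hv, map_add, hpow (M x y) a b, pow_fixed hfix, s1, s2, s3]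
      rw [show (a*Real.sin θ - b*0)/Real.sin θ = a by field_simp; ring,
        show (a*0 - b*(-Real.sin θ))/Real.sin θ = b by field_simp; ring]

end DisjConjAux

end


open DisjConjAux in
/-- Let `(W, S)` be a Coxeter system, `I ⊆ S`, and let `t, t'` be two
distinct elements of `S \ I`. Then the sets `t^{W_I} = {w t w⁻¹ : w ∈ W_I}` and
`t'^{W_I} = {w t' w⁻¹ : w ∈ W_I}` are disjoint. -/
theorem conj_orbits_of_distinct_simples_disjoint {B W : Type*} [Group W]
    {M : CoxeterMatrix B} (cs : CoxeterSystem M W) (I : Set B) (t t' : B)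
    (ht : t ∉ I) (ht' : t' ∉ I) (htt' : t ≠ t') :
    Disjoint
      {x : W | ∃ w ∈ Subgroup.closure (cs.simple '' I), x = w * cs.simple t * w⁻¹}
      {x : W | ∃ w ∈ Subgroup.closure (cs.simple '' I), x = w * cs.simple t' * w⁻¹} := by
  classical
  rw [Set.disjoint_left]
  rintro x ⟨w, hw, rfl⟩ ⟨w', hw', heq⟩
  set φ : W →* Module.End ℝ (B →₀ ℝ) := cs.lift ⟨sig M, isLiftable M⟩ with hφ
  have hφs : ∀ i : B, φ (cs.simple i) = sig M i :=
    fun i => cs.lift_apply_simple (isLiftable M) i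
  set SpanI : Submodule ℝ (B →₀ ℝ) := Submodule.span ℝ (al '' I) with hSpan
  have hcoord : ∀ z ∈ SpanI, ∀ r : B, r ∉ I → z r = 0 := by
    intro z hz r hr
    have hle : SpanI ≤ LinearMap.ker (Finsupp.lapply r : (B →₀ ℝ) →ₗ[ℝ] ℝ) := by
      rw [hSpan, Submodule.span_le]
      rintro _ ⟨i, hi, rfl⟩
      have hir : i ≠ r := fun h => hr (h ▸ hi)
      simp [LinearMap.mem_ker, al, Finsupp.single_apply, hir]
    exact hle hz
  -- the key support lemma
  have main : ∀ u ∈ Subgroup.closure (cs.simple '' I),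
      ((φ u (al t) - al t ∈ SpanI) ∧ ∀ z ∈ SpanI, φ u z ∈ SpanI)
      ∧ ((φ u⁻¹ (al t) - al t ∈ SpanI) ∧ ∀ z ∈ SpanI, φ u⁻¹ z ∈ SpanI) := by
    intro u hu
    induction hu using Subgroup.closure_induction with
    | mem g hg =>
        obtain ⟨i, hi, rfl⟩ := hg
        have base : (φ (cs.simple i) (al t) - al t ∈ SpanI)
            ∧ ∀ z ∈ SpanI, φ (cs.simple i) z ∈ SpanI := by
          constructor
          · rw [hφs, sig_apply]
            have h1 : al t - (2 * gl M i (al t)) • al i - al t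
                = (-(2 * gl M i (al t))) • al (B := B) i := by
              rw [neg_smul]; abel
            rw [h1]
            exact Submodule.smul_mem _ _ (Submodule.subset_span ⟨i, hi, rfl⟩)
          · intro z hz
            rw [hφs, sig_apply]
            exact Submodule.sub_mem _ hz
              (Submodule.smul_mem _ _ (Submodule.subset_span ⟨i, hi, rfl⟩))
        exact ⟨base, by rwa [cs.inv_simple]⟩
    | one =>
        constructor <;>
        · constructor
          · simp only [inv_one, map_one, Module.End.one_apply, sub_self]
            exact Submodule.zero_mem _
          · intro z hz
            simpa only [inv_one, map_one, Module.End.one_apply] using hz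
    | mul a b ha hb iha ihb =>
        obtain ⟨⟨ha1, ha2⟩, ⟨ha1', ha2'⟩⟩ := iha
        obtain ⟨⟨hb1, hb2⟩, ⟨hb1', hb2'⟩⟩ := ihb
        have key : ∀ (p q : W),
            ((φ p (al t) - al t ∈ SpanI) ∧ ∀ z ∈ SpanI, φ p z ∈ SpanI) →
            ((φ q (al t) - al t ∈ SpanI) ∧ ∀ z ∈ SpanI, φ q z ∈ SpanI) →
            ((φ (p * q) (al t) - al t ∈ SpanI) ∧ ∀ z ∈ SpanI, φ (p * q) z ∈ SpanI) := by
          rintro p q ⟨hp1, hp2⟩ ⟨hq1, hq2⟩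
          constructor
          · have h1 : φ (p * q) (al t) - al t
                = φ p (φ q (al t) - al t) + (φ p (al t) - al t) := by
              rw [map_mul, Module.End.mul_apply, map_sub]; abel
            rw [h1]
            exact Submodule.add_mem _ (hp2 _ hq1) hp1
          · intro z hz
            rw [map_mul, Module.End.mul_apply]
            exact hp2 _ (hq2 _ hz)
        refine ⟨key a b ⟨ha1, ha2⟩ ⟨hb1, hb2⟩, ?_⟩
        rw [mul_inv_rev]
        exact key b⁻¹ a⁻¹ ⟨hb1', hb2'⟩ ⟨ha1', ha2'⟩
    | inv a ha iha =>
        obtain ⟨h1, h2⟩ := iha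
        rw [inv_inv]
        exact ⟨h2, h1⟩
  -- assemble the contradiction
  have hu : (w'⁻¹ * w) ∈ Subgroup.closure (cs.simple '' I) := mul_mem (inv_mem hw') hw
  set u : W := w'⁻¹ * w with hudef
  have hkey : cs.simple t' = u * cs.simple t * u⁻¹ := by
    calc cs.simple t' = w'⁻¹ * (w' * cs.simple t' * w'⁻¹) * w' := by group
    _ = w'⁻¹ * (w * cs.simple t * w⁻¹) * w' := by rw [heq]
    _ = u * cs.simple t * u⁻¹ := by rw [hudef]; group
  obtain ⟨⟨hβmem, -⟩, -⟩ := main u hu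
  set β : B →₀ ℝ := φ u (al t) with hβ
  have hβt : β t = 1 := by
    have h0 : (β - al t) t = 0 := hcoord _ hβmem t ht
    rw [Finsupp.sub_apply] at h0
    have h1 : al (B := B) t t = 1 := by simp [al]
    linarith [h0, h1.symm ▸ h0]
  have hinv : φ u⁻¹ β = al t := by
    rw [hβ, ← Module.End.mul_apply, ← map_mul, inv_mul_cancel, map_one, Module.End.one_apply]
  have hstep : φ (cs.simple t) (al t) = -(al t) := by
    rw [hφs, sig_apply, gl_al, kk_diag]
    module
  have hconj : φ (cs.simple t') β = -β := by
    rw [hkey, map_mul, map_mul, Module.End.mul_apply, Module.End.mul_apply, hinv, hstep, map_neg]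
  have hdirect : φ (cs.simple t') β = β - (2 * gl M t' β) • al t' := by
    rw [hφs, sig_apply]
  have hcontra := congrArg (fun z : B →₀ ℝ => z t) (hdirect.symm.trans hconj)
  simp only [Finsupp.sub_apply, Finsupp.smul_apply, Finsupp.neg_apply, smul_eq_mul] at hcontra
  have halt' : al (B := B) t' t = 0 := by simp [al, Finsupp.single_apply, htt'.symm]
  rw [halt', mul_zero, sub_zero, hβt] at hcontra
  norm_num at hcontra
end
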